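/- arXiv:2302.07595 — 4 statements merged into one kernel-verified Lean document; each statement's English description precedes it below -/
import Mathlib

section
/- If I ⊂ S is a t-spread strongly stable ideal, then there exists a unique t-spread lex ideal J ⊂ S such that f_t(I) = f_t(J), i.e., |[I_ℓ]_t| = |[J_ℓ]_t| for all 0 ≤ ℓ ≤ d. -/
open Multiset Finset

/-- A monomial in `K[x_1,…,x_n]` is encoded by the multiset of its variable
indices (each index lies in `[1, n]`).  `TSpread n d t u` says that `u` is a
t-spread monomial: its degree is at most `d`, its indices lie in `[1,n]`, and
consecutive indices `j_k ≤ j_{k+1}` of its sorted index list satisfy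
`j_{k+1} - j_k ≥ t_k` (here `t 1 = t_1, …, t (d-1) = t_{d-1}`). -/
def TSpread (n d : ℕ) (t : ℕ → ℕ) (u : Multiset ℕ) : Prop :=
  u.card ≤ d ∧ (∀ i ∈ u, 1 ≤ i ∧ i ≤ n) ∧
    ∀ k : ℕ, k + 1 < u.card →
      (u.sort (· ≤ ·)).getD k 0 + t (k + 1) ≤ (u.sort (· ≤ ·)).getD (k + 1) 0

/-- `Mset n d ℓ t` : the set `M_{n,ℓ,t}` of t-spread monomials of degree `ℓ`. -/
def Mset (n d ℓ : ℕ) (t : ℕ → ℕ) : Set (Multiset ℕ) :=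
  {u | TSpread n d t u ∧ u.card = ℓ}

/-- the t-spread shadow `Shad_t(L) = {x_i w : w ∈ L, x_i w t-spread, i = 1..n}`. -/
def Shad (n d : ℕ) (t : ℕ → ℕ) (L : Set (Multiset ℕ)) : Set (Multiset ℕ) :=
  {v | ∃ w ∈ L, ∃ i, 1 ≤ i ∧ i ≤ n ∧ v = i ::ₘ w ∧ TSpread n d t v}

/-- largest variable index dividing `u` (0 for the constant monomial). -/
def maxVar (u : Multiset ℕ) : ℕ := (u.sort (· ≤ ·)).getLastD 0

/-- `lexGE u v` : `u ≥_lex v` for monomials of equal degree, where the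
lexicographic order is induced by `x_1 > x_2 > ⋯ > x_n`. -/
def lexGE (u v : Multiset ℕ) : Prop :=
  u = v ∨ List.Lex (· < ·) (u.sort (· ≤ ·)) (v.sort (· ≤ ·))

/-- `L` is a t-spread strongly stable set. -/
def StronglyStableSet (n d : ℕ) (t : ℕ → ℕ) (L : Set (Multiset ℕ)) : Prop :=
  ∀ u ∈ L, ∀ i ∈ u, ∀ j : ℕ, 1 ≤ j → j < i →
    TSpread n d t (j ::ₘ u.erase i) → (j ::ₘ u.erase i) ∈ L

/-- `L` is a t-spread lex set (inside `M_{n,ℓ,t}`). -/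
def LexSet (n d ℓ : ℕ) (t : ℕ → ℕ) (L : Set (Multiset ℕ)) : Prop :=
  ∀ u ∈ L, ∀ v ∈ Mset n d ℓ t, lexGE v u → v ∈ L

/-- `m_i(L)` : number of monomials of `L` with largest variable index `i`. -/
noncomputable def mEq (i : ℕ) (L : Set (Multiset ℕ)) : ℕ :=
  {u ∈ L | maxVar u = i}.ncard

/-- `m_{≤ i}(L)` : number of monomials of `L` with largest variable index `≤ i`. -/
noncomputable def mLe (i : ℕ) (L : Set (Multiset ℕ)) : ℕ :=
  {u ∈ L | maxVar u ≤ i}.ncard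

/-- `I` is (the set of monomials of) a monomial ideal of `K[x_1,…,x_n]`. -/
def MonIdeal (n : ℕ) (I : Set (Multiset ℕ)) : Prop :=
  (∀ u ∈ I, ∀ i ∈ u, 1 ≤ i ∧ i ≤ n) ∧
    ∀ u ∈ I, ∀ i : ℕ, 1 ≤ i → i ≤ n → (i ::ₘ u) ∈ I

/-- `I` is generated by t-spread monomials. -/
def TSpreadGen (n d : ℕ) (t : ℕ → ℕ) (I : Set (Multiset ℕ)) : Prop :=
  ∀ u ∈ I, ∃ v ∈ I, TSpread n d t v ∧ v ≤ u

/-- The t-spread operator `a ↦ a^{(n,ℓ,t)}`:  if `a = Σ_{j=p}^{ℓ} C(a_j, j)` is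
the Macaulay expansion of `a` with respect to `ℓ`, then
`tOp t_ℓ ℓ a = Σ_{j=p+1}^{ℓ+1} C(a_{j-1} + 1 - t_ℓ, j)`, computed greedily. -/
noncomputable def tOp (s : ℕ) : ℕ → ℕ → ℕ
  | 0, _ => 0
  | ℓ + 1, a =>
    if a = 0 then 0
    else
      (sSup {b | Nat.choose b (ℓ + 1) ≤ a} + 1 - s).choose (ℓ + 2) +
        tOp s ℓ (a - Nat.choose (sSup {b | Nat.choose b (ℓ + 1) ≤ a}) (ℓ + 1))

/-- The graded Betti number `β_{i,j}(I)` of a t-spread strongly stable ideal,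
via the Eliahou–Kervaire-type formula
`β_{i,i+q}(I) = Σ_{u ∈ G(I)_q} C(max(u) - 1 - Σ_{h=1}^{q-1} t_h, i)`. -/
noncomputable def betti (t : ℕ → ℕ) (I : Set (Multiset ℕ)) (i j : ℕ) : ℕ :=
  ∑ᶠ u ∈ {u ∈ I | u.card = j - i ∧ ∀ v ∈ I, v ≤ u → v = u},
    (maxVar u - 1 - ∑ h ∈ Finset.Icc 1 (j - i - 1), t h).choose i

namespace KK
open scoped Classical

abbrev sl (u : Multiset ℕ) : List ℕ := u.sort (· ≤ ·)

lemma sl_coe (u : Multiset ℕ) : (sl u : Multiset ℕ) = u := Multiset.sort_eq _ _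
lemma sl_sorted (u : Multiset ℕ) : (sl u).Pairwise (· ≤ ·) := Multiset.pairwise_sort _ _
lemma sl_length (u : Multiset ℕ) : (sl u).length = u.card := Multiset.length_sort _
lemma mem_sl {a : ℕ} {u : Multiset ℕ} : a ∈ sl u ↔ a ∈ u := Multiset.mem_sort _

lemma sl_of_sorted {l : List ℕ} (h : l.Pairwise (· ≤ ·)) : sl (l : Multiset ℕ) = l :=
  List.Perm.eq_of_pairwise' (sl_sorted _) h (Multiset.coe_eq_coe.1 (sl_coe _))

lemma sl_ne_nil {u : Multiset ℕ} (hu : u ≠ 0) : sl u ≠ [] := by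
  intro h0; apply hu; rw [← sl_coe u, h0]; rfl

lemma sorted_getD_mono {l : List ℕ} (h : l.Pairwise (· ≤ ·)) {i j : ℕ} (hij : i ≤ j)
    (hj : j < l.length) : l.getD i 0 ≤ l.getD j 0 := by
  rw [List.getD_eq_getElem l 0 (lt_of_le_of_lt hij hj), List.getD_eq_getElem l 0 hj]
  exact h.rel_get_of_le hij

lemma getLastD_eq_getD (l : List ℕ) : l.getLastD 0 = l.getD (l.length - 1) 0 := by
  rcases eq_or_ne l [] with rfl | h
  · rfl
  · rw [List.getLastD_eq_getLast?, List.getLast?_eq_getLast h, Option.getD_some,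
      List.getLast_eq_getElem, List.getD_eq_getElem l 0 (by
        have := List.length_pos_iff.2 h; omega)]

lemma maxVar_eq_getD (u : Multiset ℕ) : maxVar u = (sl u).getD (u.card - 1) 0 := by
  unfold maxVar; rw [getLastD_eq_getD, sl_length]

lemma le_maxVar {a : ℕ} {u : Multiset ℕ} (ha : a ∈ u) : a ≤ maxVar u := by
  rw [maxVar_eq_getD]
  rcases List.mem_iff_get.1 (mem_sl.2 ha) with ⟨i, hi⟩
  have h1 : (sl u).getD i 0 = a := by
    rw [List.getD_eq_getElem _ 0 i.isLt]; simpa using hi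
  rw [← h1]
  have hlen := i.isLt
  have hlen' : (sl u).length = Multiset.card u := sl_length u
  apply sorted_getD_mono (sl_sorted u) (by omega) (by omega)

lemma maxVar_mem {u : Multiset ℕ} (hu : u ≠ 0) : maxVar u ∈ u := by
  rw [maxVar_eq_getD, ← mem_sl]
  have h1 : 0 < (sl u).length := List.length_pos_iff.2 (sl_ne_nil hu)
  have h2 : (sl u).length = Multiset.card u := sl_length u
  rw [List.getD_eq_getElem _ 0 (by omega)]
  exact List.getElem_mem _

lemma maxVar_zero : maxVar (0 : Multiset ℕ) = 0 := by unfold maxVar; rw [Multiset.sort_zero]; rfl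

lemma sl_cons_max {w : Multiset ℕ} {j : ℕ} (hj : ∀ i ∈ w, i ≤ j) :
    sl (j ::ₘ w) = sl w ++ [j] := by
  have hs : (sl w ++ [j]).Pairwise (· ≤ ·) := by
    rw [List.pairwise_append]
    exact ⟨sl_sorted w, List.pairwise_singleton _ _,
      fun a ha b hb => by rw [List.mem_singleton] at hb; subst hb; exact hj a (mem_sl.1 ha)⟩
  have hp : ((sl w ++ [j] : List ℕ) : Multiset ℕ) = j ::ₘ w := by
    rw [← Multiset.coe_add]
    rw [show ((sl w : Multiset ℕ)) = w from sl_coe w]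
    rw [show (([j] : List ℕ) : Multiset ℕ) = {j} from rfl]
    rw [add_comm]
    rfl
  rw [← hp, sl_of_sorted hs]

lemma maxVar_cons_max {w : Multiset ℕ} {j : ℕ} (hj : ∀ i ∈ w, i ≤ j) :
    maxVar (j ::ₘ w) = j := by
  unfold maxVar
  rw [show ((j ::ₘ w).sort (· ≤ ·)) = sl w ++ [j] from sl_cons_max hj,
    getLastD_eq_getD]
  simp

lemma erase_cons_self {w : Multiset ℕ} {j : ℕ} : (j ::ₘ w).erase j = w := by simp

-- ===== batch 2 =====

lemma getD_le_of_countP {l : List ℕ} (h : l.Pairwise (· ≤ ·)) {k a : ℕ}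
    (hc : k + 1 ≤ l.countP (fun x => decide (x ≤ a))) : l.getD k 0 ≤ a := by
  induction l generalizing k with
  | nil => simp at hc
  | cons b l ih =>
    by_cases hb : b ≤ a
    · cases k with
      | zero => simpa using hb
      | succ k' =>
        rw [List.getD_cons_succ]
        apply ih h.of_cons
        rw [List.countP_cons] at hc
        simp only [hb] at hc
        norm_num at hc
        omega
    · exfalso
      have : (b :: l).countP (fun x => decide (x ≤ a)) = 0 := by
        rw [List.countP_eq_zero]
        intro x hx
        simp only [decide_eq_true_eq]
        intro hxa
        rcases List.mem_cons.1 hx with rfl | hx'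
        · exact hb hxa
        · exact hb (le_trans (List.rel_of_pairwise_cons h hx') hxa)
      omega

lemma countP_ge_of_sorted {l : List ℕ} (h : l.Pairwise (· ≤ ·)) {k : ℕ} (hk : k < l.length) :
    k + 1 ≤ l.countP (fun x => decide (x ≤ l.getD k 0)) := by
  induction l generalizing k with
  | nil => simp at hk
  | cons b l ih =>
    cases k with
    | zero => rw [List.countP_cons]; simp
    | succ k' =>
      rw [List.getD_cons_succ, List.countP_cons]
      have h1 := ih h.of_cons (by simpa using hk)
      have h2 : b ≤ l.getD k' 0 := by
        have hk' : k' < l.length := by simpa using hk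
        have : l.getD k' 0 ∈ l := by
          rw [List.getD_eq_getElem _ 0 hk']; exact List.getElem_mem _
        exact List.rel_of_pairwise_cons h this
      simp only [decide_eq_true_eq]
      rw [if_pos h2]
      omega

/-- order statistics: if `v ≤ u` then the `k`-th smallest element of `u`
is at most the `k`-th smallest element of `v`. -/
lemma getD_sl_le_of_le {u v : Multiset ℕ} (h : v ≤ u) {k : ℕ} (hk : k < Multiset.card v) :
    (sl u).getD k 0 ≤ (sl v).getD k 0 := by
  set a := (sl v).getD k 0 with ha
  have h1 : k + 1 ≤ (sl v).countP (fun x => decide (x ≤ a)) :=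
    countP_ge_of_sorted (sl_sorted v) (by rw [sl_length]; exact hk)
  have h2 : (sl v).countP (fun x => decide (x ≤ a)) ≤ (sl u).countP (fun x => decide (x ≤ a)) := by
    have := Multiset.countP_le_of_le (fun x => x ≤ a) h
    rwa [← sl_coe v, ← sl_coe u, Multiset.coe_countP, Multiset.coe_countP] at this
  exact getD_le_of_countP (sl_sorted u) (le_trans h1 h2)

lemma lex_of_pointwise : ∀ (l₁ l₂ : List ℕ), l₁.length = l₂.length →
    (∀ k, k < l₁.length → l₁.getD k 0 ≤ l₂.getD k 0) →
    l₁ = l₂ ∨ List.Lex (· < ·) l₁ l₂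
  | [], [], _, _ => Or.inl rfl
  | [], (b :: l₂), h, _ => by simp at h
  | (a :: l₁), [], h, _ => by simp at h
  | (a :: l₁), (b :: l₂), h, hp => by
    rcases lt_or_eq_of_le (hp 0 (by simp)) with hab | hab
    · exact Or.inr (List.Lex.rel (by simpa using hab))
    · have hab' : a = b := by simpa using hab
      subst hab'
      rcases lex_of_pointwise l₁ l₂ (by simpa using h)
        (fun k hk => by
          have := hp (k+1) (by simpa using Nat.succ_lt_succ hk)
          simpa using this) with h' | h'
      · exact Or.inl (by rw [h'])
      · exact Or.inr (List.Lex.cons h')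

lemma lex_append {l₁ l₂ r₁ r₂ : List ℕ} (h : List.Lex (· < ·) l₁ l₂)
    (hl : l₁.length = l₂.length) : List.Lex (· < ·) (l₁ ++ r₁) (l₂ ++ r₂) := by
  induction h with
  | nil => simp at hl
  | @rel a l₁' b l₂' hab => exact List.Lex.rel hab
  | @cons a l₁' l₂' h' ih =>
    exact List.Lex.cons (ih (by simpa using hl))

lemma lex_append_case : ∀ {l₁ l₂ : List ℕ} {a b : ℕ},
    List.Lex (· < ·) (l₁ ++ [a]) (l₂ ++ [b]) → l₁.length = l₂.length →
    (l₁ = l₂ ∧ a < b) ∨ List.Lex (· < ·) l₁ l₂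
  | [], [], a, b, h, _ => by
    left
    refine ⟨rfl, ?_⟩
    cases h with
    | rel hab => exact hab
    | cons h' => cases h'
  | [], (c :: l₂), _, _, _, hl => by simp at hl
  | (c :: l₁), [], _, _, _, hl => by simp at hl
  | (c :: l₁), (e :: l₂), a, b, h, hl => by
    cases h with
    | rel hce => exact Or.inr (List.Lex.rel hce)
    | cons h' =>
      rcases lex_append_case h' (by simpa using hl) with ⟨h1, h2⟩ | h1
      · exact Or.inl ⟨by rw [h1], h2⟩
      · exact Or.inr (List.Lex.cons h1)

lemma lexGE_refl (u : Multiset ℕ) : lexGE u u := Or.inl rfl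

lemma lexGE_trans {u v w : Multiset ℕ} (h1 : lexGE u v) (h2 : lexGE v w) : lexGE u w := by
  rcases h1 with rfl | h1
  · exact h2
  · rcases h2 with rfl | h2
    · exact Or.inr h1
    · exact Or.inr (List.lex_trans lt_trans h1 h2)

lemma lexGE_antisymm {u v : Multiset ℕ} (h1 : lexGE u v) (h2 : lexGE v u) : u = v := by
  rcases h1 with rfl | h1
  · rfl
  · rcases h2 with rfl | h2
    · rfl
    · exact absurd h2 (asymm h1)

lemma lexGE_total (u v : Multiset ℕ) : lexGE u v ∨ lexGE v u := by
  rcases eq_or_ne u v with rfl | h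
  · exact Or.inl (Or.inl rfl)
  · have hne : sl u ≠ sl v := by
      intro he
      apply h
      rw [← sl_coe u, ← sl_coe v, he]
    have htri : IsTrichotomous (List ℕ) (List.Lex (· < ·)) := inferInstance
    rcases trichotomous (r := List.Lex (· < ·)) (sl u) (sl v) with h' | h' | h'
    · exact Or.inl (Or.inr h')
    · exact absurd h' hne
    · exact Or.inr (Or.inr h')


-- ===== batch 3 =====

section
variable {n d : ℕ} {t : ℕ → ℕ}

lemma take_sorted (u : Multiset ℕ) (m : ℕ) : ((sl u).take m).Pairwise (· ≤ ·) :=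
  List.Pairwise.sublist (List.take_sublist m (sl u)) (sl_sorted u)

lemma sl_take (u : Multiset ℕ) (m : ℕ) :
    sl (((sl u).take m : List ℕ) : Multiset ℕ) = (sl u).take m :=
  sl_of_sorted (take_sorted u m)

lemma take_le (u : Multiset ℕ) (m : ℕ) : (((sl u).take m : List ℕ) : Multiset ℕ) ≤ u := by
  conv_rhs => rw [← sl_coe u]
  exact Multiset.coe_le.2 (List.Sublist.subperm (List.take_sublist m (sl u)))

lemma take_card (u : Multiset ℕ) (m : ℕ) :
    Multiset.card (((sl u).take m : List ℕ) : Multiset ℕ) = min m (Multiset.card u) := by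
  rw [Multiset.coe_card, List.length_take, sl_length]

lemma take_full (u : Multiset ℕ) : (((sl u).take (Multiset.card u) : List ℕ) : Multiset ℕ) = u := by
  rw [← sl_length, List.take_length, sl_coe]

lemma tspread_take {u : Multiset ℕ} (h : TSpread n d t u) (m : ℕ) :
    TSpread n d t (((sl u).take m : List ℕ) : Multiset ℕ) := by
  obtain ⟨hc, hmem, hgap⟩ := h
  refine ⟨?_, ?_, ?_⟩
  · rw [take_card]; omega
  · intro i hi
    exact hmem i (mem_sl.1 (List.mem_of_mem_take (by rwa [← mem_sl, sl_take] at hi)))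
  · intro k hk
    rw [take_card] at hk
    rw [show (((((sl u).take m : List ℕ) : Multiset ℕ)).sort (· ≤ ·)) = (sl u).take m
      from sl_take u m]
    have h1 : k < (sl u).length := by rw [sl_length]; omega
    have h2 : k + 1 < (sl u).length := by rw [sl_length]; omega
    have e1 : ((sl u).take m).getD k 0 = (sl u).getD k 0 := by
      rw [List.getD_eq_getElem _ 0 (by rw [List.length_take, sl_length]; omega),
        List.getD_eq_getElem _ 0 h1, List.getElem_take]
    have e2 : ((sl u).take m).getD (k+1) 0 = (sl u).getD (k+1) 0 := by
      rw [List.getD_eq_getElem _ 0 (by rw [List.length_take, sl_length]; omega),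
        List.getD_eq_getElem _ 0 h2, List.getElem_take]
    rw [e1, e2]
    exact hgap k (by rw [← sl_length]; omega)

lemma tspread_cons_max_intro {w : Multiset ℕ} {j : ℕ} (hw : TSpread n d t w)
    (hcard : Multiset.card w + 1 ≤ d) (hj1 : 1 ≤ j) (hjn : j ≤ n)
    (hmax : ∀ i ∈ w, i ≤ j) (hgap : w ≠ 0 → maxVar w + t (Multiset.card w) ≤ j) :
    TSpread n d t (j ::ₘ w) := by
  obtain ⟨hc, hmem, hg⟩ := hw
  have hsl : ((j ::ₘ w).sort (· ≤ ·)) = sl w ++ [j] := sl_cons_max hmax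
  refine ⟨by simpa using hcard, ?_, ?_⟩
  · intro i hi
    rcases Multiset.mem_cons.1 hi with rfl | hi'
    · exact ⟨hj1, hjn⟩
    · exact hmem i hi'
  · intro k hk
    simp only [Multiset.card_cons] at hk
    rw [hsl]
    have hlen : (sl w).length = Multiset.card w := sl_length w
    rcases Nat.lt_or_ge (k+1) (Multiset.card w) with hlt | hge
    · rw [List.getD_append _ _ _ _ (by omega), List.getD_append _ _ _ _ (by omega)]
      exact hg k hlt
    · -- k + 1 = card w
      have hke : k + 1 = Multiset.card w := by omega
      have hw0 : w ≠ 0 := by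
        intro h0; rw [h0] at hke; simp at hke
      rw [List.getD_append _ _ _ _ (by omega),
        List.getD_append_right _ _ _ _ (by omega)]
      have : (k + 1) - (sl w).length = 0 := by omega
      rw [this]
      simp only [List.getD_cons_zero]
      have := hgap hw0
      rw [maxVar_eq_getD] at this
      rw [hke, show k = Multiset.card w - 1 by omega]
      omega

lemma tspread_cons_max_elim {w : Multiset ℕ} {j : ℕ}
    (h : TSpread n d t (j ::ₘ w)) (hmax : ∀ i ∈ w, i ≤ j) :
    TSpread n d t w ∧ (w ≠ 0 → maxVar w + t (Multiset.card w) ≤ j) ∧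
      1 ≤ j ∧ j ≤ n ∧ Multiset.card w + 1 ≤ d := by
  obtain ⟨hc, hmem, hg⟩ := h
  have hsl : ((j ::ₘ w).sort (· ≤ ·)) = sl w ++ [j] := sl_cons_max hmax
  simp only [Multiset.card_cons] at hc hg
  have hlen : (sl w).length = Multiset.card w := sl_length w
  have hjmem := hmem j (Multiset.mem_cons_self _ _)
  refine ⟨⟨by omega, fun i hi => hmem i (Multiset.mem_cons_of_mem hi), ?_⟩, ?_, hjmem.1, hjmem.2, by omega⟩
  · intro k hk
    have := hg k (by omega)
    rw [hsl, List.getD_append _ _ _ _ (by omega), List.getD_append _ _ _ _ (by omega)] at this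
    exact this
  · intro hw0
    have hcw : 1 ≤ Multiset.card w := by
      rcases Multiset.exists_mem_of_ne_zero hw0 with ⟨a, ha⟩
      have := Multiset.card_pos.2 hw0
      omega
    have := hg (Multiset.card w - 1) (by omega)
    rw [hsl, List.getD_append _ _ _ _ (by omega),
      List.getD_append_right _ _ _ _ (by omega)] at this
    rw [maxVar_eq_getD]
    have he : Multiset.card w - 1 + 1 = Multiset.card w := by omega
    rw [he] at this
    have h0 : Multiset.card w - (sl w).length = 0 := by omega
    rw [h0] at this
    simpa using this

lemma tspread_mono_n {n' : ℕ} (h : n ≤ n') {u : Multiset ℕ} (hu : TSpread n d t u) :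
    TSpread n' d t u :=
  ⟨hu.1, fun i hi => ⟨(hu.2.1 i hi).1, le_trans (hu.2.1 i hi).2 h⟩, hu.2.2⟩

lemma tspread_restrict {i : ℕ} {u : Multiset ℕ} (hu : TSpread n d t u)
    (hi : ∀ a ∈ u, a ≤ i) : TSpread i d t u :=
  ⟨hu.1, fun a ha => ⟨(hu.2.1 a ha).1, hi a ha⟩, hu.2.2⟩

end

-- ===== batch 4 =====

noncomputable def Mf (d : ℕ) (t : ℕ → ℕ) (n k : ℕ) : Finset (Multiset ℕ) :=
  ((k • (Finset.Icc 1 n).val).powerset.toFinset).filter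
    (fun u => TSpread n d t u ∧ Multiset.card u = k)

section
variable {d : ℕ} {t : ℕ → ℕ}

lemma mem_Mf {n k : ℕ} {u : Multiset ℕ} :
    u ∈ Mf d t n k ↔ TSpread n d t u ∧ Multiset.card u = k := by
  unfold Mf
  rw [Finset.mem_filter]
  constructor
  · rintro ⟨-, h⟩; exact h
  · rintro ⟨h1, h2⟩
    refine ⟨?_, h1, h2⟩
    rw [Multiset.mem_toFinset, Multiset.mem_powerset]
    rw [Multiset.le_iff_count]
    intro a
    by_cases ha : a ∈ u
    · have h3 := h1.2.1 a ha
      have h4 : a ∈ (Finset.Icc 1 n).val := by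
        rw [Finset.mem_val, Finset.mem_Icc]; exact h3
      have h5 : Multiset.count a ((Finset.Icc 1 n).val) = 1 := by
        exact Multiset.count_eq_one_of_mem (Finset.Icc 1 n).nodup h4
      rw [Multiset.count_nsmul, h5, mul_one]
      calc Multiset.count a u ≤ Multiset.card u := Multiset.count_le_card a u
        _ = k := h2
    · rw [Multiset.count_eq_zero_of_notMem ha]
      exact Nat.zero_le _

noncomputable def rank (d : ℕ) (t : ℕ → ℕ) (n k : ℕ) (u : Multiset ℕ) : ℕ :=
  ((Mf d t n k).filter (fun v => lexGE v u)).card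

noncomputable def Top (d : ℕ) (t : ℕ → ℕ) (n k s : ℕ) : Finset (Multiset ℕ) :=
  (Mf d t n k).filter (fun u => rank d t n k u ≤ s)

/-- upward (lex) closed subset of `Mf` -/
def UC (d : ℕ) (t : ℕ → ℕ) (n k : ℕ) (X : Finset (Multiset ℕ)) : Prop :=
  X ⊆ Mf d t n k ∧ ∀ u ∈ X, ∀ v ∈ Mf d t n k, lexGE v u → v ∈ X

variable {n k s : ℕ}

lemma rank_pos {u : Multiset ℕ} (hu : u ∈ Mf d t n k) : 1 ≤ rank d t n k u := by
  rw [rank]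
  rw [Nat.one_le_iff_ne_zero, ← Nat.pos_iff_ne_zero, Finset.card_pos]
  exact ⟨u, Finset.mem_filter.2 ⟨hu, lexGE_refl u⟩⟩

lemma rank_le_card {u : Multiset ℕ} : rank d t n k u ≤ (Mf d t n k).card := by
  exact Finset.card_le_card (Finset.filter_subset _ _)

lemma rank_antitone {u v : Multiset ℕ} (h : lexGE v u) : rank d t n k v ≤ rank d t n k u := by
  apply Finset.card_le_card
  intro w hw
  rw [Finset.mem_filter] at hw ⊢
  exact ⟨hw.1, lexGE_trans hw.2 h⟩

lemma rank_lt {u v : Multiset ℕ} (hu : u ∈ Mf d t n k) (h : lexGE v u) (hne : v ≠ u) :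
    rank d t n k v < rank d t n k u := by
  have hsub : (Mf d t n k).filter (fun w => lexGE w v) ⊆
      ((Mf d t n k).filter (fun w => lexGE w u)).erase u := by
    intro w hw
    rw [Finset.mem_filter] at hw
    rw [Finset.mem_erase, Finset.mem_filter]
    refine ⟨?_, hw.1, lexGE_trans hw.2 h⟩
    rintro rfl
    exact hne (lexGE_antisymm h hw.2)
  have h1 := Finset.card_le_card hsub
  have h2 : u ∈ (Mf d t n k).filter (fun w => lexGE w u) :=
    Finset.mem_filter.2 ⟨hu, lexGE_refl u⟩
  have h3 := Finset.card_erase_of_mem h2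
  have h4 := rank_pos (d := d) (t := t) hu
  unfold rank at *
  omega

lemma top_subset : Top d t n k s ⊆ Mf d t n k := Finset.filter_subset _ _

lemma mem_top {u : Multiset ℕ} :
    u ∈ Top d t n k s ↔ u ∈ Mf d t n k ∧ rank d t n k u ≤ s := by
  unfold Top
  rw [Finset.mem_filter]

lemma top_UC : UC d t n k (Top d t n k s) := by
  refine ⟨top_subset, fun u hu v hv h => ?_⟩
  rw [mem_top] at hu ⊢
  exact ⟨hv, le_trans (rank_antitone h) hu.2⟩

lemma top_mono {s s' : ℕ} (h : s ≤ s') : Top d t n k s ⊆ Top d t n k s' := by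
  intro u hu
  rw [mem_top] at hu ⊢
  exact ⟨hu.1, le_trans hu.2 h⟩

lemma UC_eq_top {X : Finset (Multiset ℕ)} (h : UC d t n k X) : X = Top d t n k X.card := by
  obtain ⟨hsub, hcl⟩ := h
  ext u
  rw [mem_top]
  constructor
  · intro hu
    refine ⟨hsub hu, ?_⟩
    apply Finset.card_le_card
    intro v hv
    rw [Finset.mem_filter] at hv
    exact hcl u hu v hv.1 hv.2
  · rintro ⟨hu, hr⟩
    by_contra hnot
    have hsub2 : X ⊆ ((Mf d t n k).filter (fun w => lexGE w u)).erase u := by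
      intro v hv
      rw [Finset.mem_erase, Finset.mem_filter]
      have hvne : v ≠ u := by rintro rfl; exact hnot hv
      rcases lexGE_total v u with h1 | h1
      · exact ⟨hvne, hsub hv, h1⟩
      · exact absurd (hcl v hv u hu h1) hnot
    have h1 := Finset.card_le_card hsub2
    have h2 : u ∈ (Mf d t n k).filter (fun w => lexGE w u) :=
      Finset.mem_filter.2 ⟨hu, lexGE_refl u⟩
    have h3 := Finset.card_erase_of_mem h2
    have h4 := rank_pos (d := d) (t := t) hu
    have h5 : rank d t n k u = ((Mf d t n k).filter (fun w => lexGE w u)).card := rfl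
    omega

lemma UC_unique {X Y : Finset (Multiset ℕ)} (hX : UC d t n k X) (hY : UC d t n k Y)
    (h : X.card = Y.card) : X = Y := by
  rw [UC_eq_top hX, UC_eq_top hY, h]

lemma top_card (hs : s ≤ (Mf d t n k).card) : (Top d t n k s).card = s := by
  set M := Mf d t n k with hM
  set N := M.card with hN
  have hbij : (M.filter (fun u => rank d t n k u ≤ s)).card
      = ((Finset.Icc 1 N).filter (fun x => x ≤ s)).card := by
    apply Finset.card_bij (fun u _ => rank d t n k u)
    · intro u hu
      rw [Finset.mem_filter] at hu ⊢
      refine ⟨Finset.mem_Icc.2 ⟨rank_pos hu.1, rank_le_card⟩, hu.2⟩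
    · intro u hu v hv he
      rw [Finset.mem_filter] at hu hv
      by_contra hne
      rcases lexGE_total u v with h1 | h1
      · have := rank_lt (d := d) (t := t) hv.1 h1 hne; omega
      · have := rank_lt (d := d) (t := t) hu.1 h1 (Ne.symm hne); omega
    · intro b hb
      rw [Finset.mem_filter, Finset.mem_Icc] at hb
      -- surjectivity of rank onto Icc 1 N
      have hsurj := Finset.surj_on_of_inj_on_of_card_le
        (s := M) (t := Finset.Icc 1 N) (fun u _ => rank d t n k u)
        (fun u hu => Finset.mem_Icc.2 ⟨rank_pos hu, rank_le_card⟩)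
        (fun u v hu hv he => by
          by_contra hne
          rcases lexGE_total u v with h1 | h1
          · have := rank_lt (d := d) (t := t) hv h1 hne; omega
          · have := rank_lt (d := d) (t := t) hu h1 (Ne.symm hne); omega)
        (by rw [Nat.card_Icc]; omega)
      rcases hsurj b (Finset.mem_Icc.2 ⟨hb.1.1, hb.1.2⟩) with ⟨u, hu, hub⟩
      exact ⟨u, Finset.mem_filter.2 ⟨hu, by omega⟩, hub.symm⟩
  rw [Top, hbij]
  have : (Finset.Icc 1 N).filter (fun x => x ≤ s) = Finset.Icc 1 s := by
    ext x
    rw [Finset.mem_filter, Finset.mem_Icc, Finset.mem_Icc]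
    omega
  rw [this, Nat.card_Icc]
  omega

end


-- ===== batch 5 : children / valid =====
section
variable {d : ℕ} {t : ℕ → ℕ}

noncomputable def valid (d : ℕ) (t : ℕ → ℕ) (n : ℕ) (w : Multiset ℕ) : Finset ℕ :=
  (Finset.Icc 1 n).filter (fun j => (∀ i ∈ w, i ≤ j) ∧ TSpread n d t (j ::ₘ w))

noncomputable def children (d : ℕ) (t : ℕ → ℕ) (n : ℕ) (X : Finset (Multiset ℕ)) :
    Finset (Multiset ℕ) :=
  X.biUnion (fun w => (valid d t n w).image (fun j => j ::ₘ w))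

variable {n k : ℕ}

lemma mem_valid {w : Multiset ℕ} {j : ℕ} :
    j ∈ valid d t n w ↔ (1 ≤ j ∧ j ≤ n) ∧ (∀ i ∈ w, i ≤ j) ∧ TSpread n d t (j ::ₘ w) := by
  unfold valid
  rw [Finset.mem_filter, Finset.mem_Icc]

lemma mem_children {X : Finset (Multiset ℕ)} {v : Multiset ℕ} :
    v ∈ children d t n X ↔ ∃ w ∈ X, ∃ j ∈ valid d t n w, v = j ::ₘ w := by
  unfold children
  rw [Finset.mem_biUnion]
  constructor
  · rintro ⟨w, hw, hv⟩
    rw [Finset.mem_image] at hv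
    rcases hv with ⟨j, hj, rfl⟩
    exact ⟨w, hw, j, hj, rfl⟩
  · rintro ⟨w, hw, j, hj, rfl⟩
    exact ⟨w, hw, Finset.mem_image.2 ⟨j, hj, rfl⟩⟩

lemma decomp_unique {w : Multiset ℕ} {j : ℕ} (hj : ∀ i ∈ w, i ≤ j) :
    maxVar (j ::ₘ w) = j ∧ (j ::ₘ w).erase (maxVar (j ::ₘ w)) = w := by
  have h1 : maxVar (j ::ₘ w) = j := maxVar_cons_max hj
  exact ⟨h1, by rw [h1]; simp⟩

lemma card_children {X : Finset (Multiset ℕ)} :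
    (children d t n X).card = ∑ w ∈ X, (valid d t n w).card := by
  unfold children
  rw [Finset.card_biUnion]
  · apply Finset.sum_congr rfl
    intro w _
    apply Finset.card_image_of_injOn
    intro j hj j' hj' he
    simp only [Finset.mem_coe] at hj hj'
    dsimp only at he
    rw [mem_valid] at hj hj'
    have h1 := (decomp_unique hj.2.1).1
    have h2 := (decomp_unique hj'.2.1).1
    rw [← h1, ← h2, he]
  · intro w hw w' hw' hne
    apply Finset.disjoint_left.2
    intro v hv hv'
    rw [Finset.mem_image] at hv hv'
    rcases hv with ⟨j, hj, rfl⟩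
    rcases hv' with ⟨j', hj', he⟩
    rw [mem_valid] at hj hj'
    apply hne
    have h1 := decomp_unique hj.2.1
    have h2 := decomp_unique hj'.2.1
    rw [he] at h2
    rw [← h1.2, ← h2.2]

lemma children_subset_Mf {X : Finset (Multiset ℕ)} (hX : X ⊆ Mf d t n k) :
    children d t n X ⊆ Mf d t n (k + 1) := by
  intro v hv
  rw [mem_children] at hv
  rcases hv with ⟨w, hw, j, hj, rfl⟩
  rw [mem_valid] at hj
  have hw' := mem_Mf.1 (hX hw)
  rw [mem_Mf]
  exact ⟨hj.2.2, by rw [Multiset.card_cons, hw'.2]⟩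

lemma mem_of_Mf_pos {u : Multiset ℕ} (hu : u ∈ Mf d t n k) (hk : 1 ≤ k) : u ≠ 0 := by
  intro h0
  have := (mem_Mf.1 hu).2
  rw [h0] at this
  simp at this
  omega

lemma maxVar_pos_of_Mf {u : Multiset ℕ} (hu : u ∈ Mf d t n k) (hk : 1 ≤ k) :
    1 ≤ maxVar u ∧ maxVar u ≤ n := by
  have h0 := mem_of_Mf_pos hu hk
  have hm := maxVar_mem h0
  exact ⟨((mem_Mf.1 hu).1.2.1 _ hm).1, ((mem_Mf.1 hu).1.2.1 _ hm).2⟩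

lemma valid_eq_Icc {w : Multiset ℕ} (hw : w ∈ Mf d t n k) (hk : 1 ≤ k) (hkd : k + 1 ≤ d) :
    valid d t n w = Finset.Icc (maxVar w + t k) n := by
  obtain ⟨hts, hcard⟩ := mem_Mf.1 hw
  have hw0 : w ≠ 0 := mem_of_Mf_pos hw hk
  ext j
  rw [mem_valid, Finset.mem_Icc]
  constructor
  · rintro ⟨⟨h1, h2⟩, hmax, hts'⟩
    have := tspread_cons_max_elim hts' hmax
    rcases this with ⟨-, hgap, -⟩
    rw [hcard] at hgap
    exact ⟨hgap hw0, h2⟩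
  · rintro ⟨h1, h2⟩
    have hmaxw := maxVar_pos_of_Mf hw hk
    have hmax : ∀ i ∈ w, i ≤ j := fun i hi => le_trans (le_maxVar hi) (by omega)
    refine ⟨⟨by omega, h2⟩, hmax, ?_⟩
    exact tspread_cons_max_intro hts (by omega) (by omega) h2 hmax
      (fun _ => by rw [hcard]; omega)

lemma valid_empty {w : Multiset ℕ} (hw : w ∈ Mf d t n k) (hkd : d < k + 1) :
    valid d t n w = ∅ := by
  obtain ⟨hts, hcard⟩ := mem_Mf.1 hw
  ext j
  simp only [Finset.notMem_empty, iff_false, mem_valid]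
  rintro ⟨-, -, hts'⟩
  have := hts'.1
  rw [Multiset.card_cons, hcard] at this
  omega

lemma valid_card_eq {w : Multiset ℕ} (hw : w ∈ Mf d t n k) (hk : 1 ≤ k) (hkd : k + 1 ≤ d) :
    (valid d t n w).card = (n + 1) - (maxVar w + t k) := by
  rw [valid_eq_Icc hw hk hkd, Nat.card_Icc]

lemma valid_card_antitone {w w' : Multiset ℕ} (hw : w ∈ Mf d t n k) (hw' : w' ∈ Mf d t n k)
    (hk : 1 ≤ k) (h : maxVar w ≤ maxVar w') :
    (valid d t n w').card ≤ (valid d t n w).card := by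
  rcases Nat.lt_or_ge d (k + 1) with hd | hd
  · rw [valid_empty hw' hd]
    simp
  · rw [valid_card_eq hw hk hd, valid_card_eq hw' hk hd]
    omega

lemma top_mem_valid {w : Multiset ℕ} (hw : w ∈ Mf d t n k) (hk : 1 ≤ k) (hkd : k + 1 ≤ d)
    (h : maxVar w + t k ≤ n) : n ∈ valid d t n w := by
  rw [valid_eq_Icc hw hk hkd, Finset.mem_Icc]
  omega

end


-- ===== batch 6 : Abel summation =====
section
variable {n : ℕ}

lemma tele_sum {G : ℕ → ℕ} (hG : ∀ i, G (i + 1) ≤ G i) (hGn : G (n + 1) = 0) :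
    ∀ m a, a + m = n + 1 → G a = ∑ j ∈ Finset.Icc a n, (G j - G (j + 1)) := by
  intro m
  induction m with
  | zero =>
    intro a ha
    have : Finset.Icc a n = ∅ := by
      rw [Finset.Icc_eq_empty_iff]
      omega
    rw [this, Finset.sum_empty]
    rw [show a = n + 1 by omega, hGn]
  | succ m ih =>
    intro a ha
    have han : a ≤ n := by omega
    rw [show Finset.Icc a n = insert a (Finset.Icc (a + 1) n) by
      ext j
      simp only [Finset.mem_Icc, Finset.mem_insert]
      omega]
    rw [Finset.sum_insert (by rw [Finset.mem_Icc]; omega)]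
    rw [← ih (a + 1) (by omega)]
    have := hG a
    omega

lemma abel_le {X Y : Finset (Multiset ℕ)} {G : ℕ → ℕ}
    (hG : ∀ i, G (i + 1) ≤ G i) (hGn : G (n + 1) = 0)
    (hX : ∀ u ∈ X, maxVar u ≤ n)
    (h : ∀ j, (X.filter (fun u => maxVar u ≤ j)).card ≤
      (Y.filter (fun u => maxVar u ≤ j)).card) :
    ∑ u ∈ X, G (maxVar u) ≤ ∑ u ∈ Y, G (maxVar u) := by
  have key : ∀ (Z : Finset (Multiset ℕ)), (∀ u ∈ Z, maxVar u ≤ n) →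
      ∑ u ∈ Z, G (maxVar u) =
        ∑ j ∈ Finset.range (n + 1), (G j - G (j + 1)) *
          (Z.filter (fun u => maxVar u ≤ j)).card := by
    intro Z hZ
    have e1 : ∀ u ∈ Z, G (maxVar u) =
        ∑ j ∈ Finset.range (n + 1), (if maxVar u ≤ j then G j - G (j + 1) else 0) := by
      intro u hu
      rw [tele_sum hG hGn (n + 1 - maxVar u) (maxVar u) (by have := hZ u hu; omega)]
      rw [← Finset.sum_filter]
      congr 1
      ext j
      rw [Finset.mem_Icc, Finset.mem_filter, Finset.mem_range]
      omega
    rw [Finset.sum_congr rfl e1, Finset.sum_comm]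
    apply Finset.sum_congr rfl
    intro j _
    rw [← Finset.sum_filter, Finset.sum_const, smul_eq_mul, mul_comm]
  have hYn : ∀ u ∈ Y, maxVar u ≤ n → True := fun _ _ _ => trivial
  rw [key X hX]
  -- for Y we may not know maxVar ≤ n for all u; handle by splitting Y
  have hsplit : ∑ u ∈ Y, G (maxVar u) ≥
      ∑ u ∈ Y.filter (fun u => maxVar u ≤ n), G (maxVar u) :=
    Finset.sum_le_sum_of_subset (Finset.filter_subset _ _)
  refine le_trans ?_ hsplit
  rw [key (Y.filter (fun u => maxVar u ≤ n)) (fun u hu => (Finset.mem_filter.1 hu).2)]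
  apply Finset.sum_le_sum
  intro j hj
  apply Nat.mul_le_mul_left
  rw [Finset.filter_filter]
  rw [Finset.mem_range] at hj
  have he : Finset.filter (fun a => maxVar a ≤ n ∧ maxVar a ≤ j) Y
      = Finset.filter (fun a => maxVar a ≤ j) Y := by
    apply Finset.filter_congr
    intro u _
    constructor
    · intro hu; exact hu.2
    · intro hu; exact ⟨by omega, hu⟩
  rw [he]
  exact h j
  
end


-- ===== batch 7a : lex vs parent decomposition =====
section
variable {d : ℕ} {t : ℕ → ℕ} {n k : ℕ}

lemma lex_append_last {l : List ℕ} {a b : ℕ} (h : a < b) :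
    List.Lex (· < ·) (l ++ [a]) (l ++ [b]) := by
  induction l with
  | nil => exact List.Lex.rel h
  | cons c l ih => exact List.Lex.cons ih

/-- same parent: smaller appended max is lex-bigger -/
lemma lexGE_cons_same {w : Multiset ℕ} {j j' : ℕ} (hj : ∀ i ∈ w, i ≤ j)
    (hj' : ∀ i ∈ w, i ≤ j') (h : j ≤ j') : lexGE (j ::ₘ w) (j' ::ₘ w) := by
  rcases eq_or_lt_of_le h with rfl | hlt
  · exact Or.inl rfl
  · right
    rw [show ((j ::ₘ w).sort (· ≤ ·)) = sl w ++ [j] from sl_cons_max hj,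
      show ((j' ::ₘ w).sort (· ≤ ·)) = sl w ++ [j'] from sl_cons_max hj']
    exact lex_append_last hlt

/-- different parents: comparison of children equals comparison of parents -/
lemma lexGE_cons_diff {w w' : Multiset ℕ} {j j' : ℕ} (hj : ∀ i ∈ w, i ≤ j)
    (hj' : ∀ i ∈ w', i ≤ j') (hcard : Multiset.card w = Multiset.card w')
    (hne : w ≠ w') : lexGE (j' ::ₘ w') (j ::ₘ w) ↔ lexGE w' w := by
  have hsl : ((j ::ₘ w).sort (· ≤ ·)) = sl w ++ [j] := sl_cons_max hj
  have hsl' : ((j' ::ₘ w').sort (· ≤ ·)) = sl w' ++ [j'] := sl_cons_max hj'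
  have hlen : (sl w').length = (sl w).length := by
    rw [sl_length, sl_length, hcard]
  constructor
  · intro h
    rcases h with he | hlex
    · exfalso
      apply hne
      have h1 : maxVar (j' ::ₘ w') = j' := maxVar_cons_max hj'
      have h2 : maxVar (j ::ₘ w) = j := maxVar_cons_max hj
      rw [he] at h1
      have hjj : j' = j := by rw [← h1, h2]
      subst hjj
      exact ((Multiset.cons_inj_right j').1 he).symm
    · rw [hsl, hsl'] at hlex
      rcases lex_append_case hlex hlen with ⟨h1, -⟩ | h1
      · exfalso
        apply hne
        have h2 : ((sl w' : List ℕ) : Multiset ℕ) = ((sl w : List ℕ) : Multiset ℕ) := by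
          rw [h1]
        rw [sl_coe, sl_coe] at h2
        exact h2.symm
      · exact Or.inr h1
  · intro h
    rcases h with rfl | hlex
    · exact absurd rfl hne
    · right
      rw [hsl, hsl']
      exact lex_append (r₁ := [j']) (r₂ := [j]) hlex hlen

/-- the parent of `u` : erase the largest variable -/
noncomputable def pnt (u : Multiset ℕ) : Multiset ℕ := u.erase (maxVar u)

lemma pnt_spec {u : Multiset ℕ} (hu : u ≠ 0) :
    u = maxVar u ::ₘ pnt u ∧ (∀ i ∈ pnt u, i ≤ maxVar u) ∧
      Multiset.card (pnt u) + 1 = Multiset.card u := by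
  have hm : maxVar u ∈ u := maxVar_mem hu
  refine ⟨(Multiset.cons_erase hm).symm, ?_, ?_⟩
  · intro i hi
    exact le_maxVar (Multiset.mem_of_mem_erase hi)
  · show Multiset.card (u.erase (maxVar u)) + 1 = Multiset.card u
    rw [Multiset.card_erase_of_mem hm]
    have := Multiset.card_pos.2 hu
    have h2 : (Multiset.card u).pred = Multiset.card u - 1 := rfl
    omega

lemma pnt_cons {w : Multiset ℕ} {j : ℕ} (hj : ∀ i ∈ w, i ≤ j) : pnt (j ::ₘ w) = w := by
  unfold pnt
  rw [maxVar_cons_max hj]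
  simp

/-- lex comparison descends to parents -/
lemma lexGE_pnt {u v : Multiset ℕ} (hu : u ≠ 0) (hv : v ≠ 0)
    (hcard : Multiset.card u = Multiset.card v) (h : lexGE v u) : lexGE (pnt v) (pnt u) := by
  rcases eq_or_ne (pnt v) (pnt u) with he | hne
  · rw [he]; exact Or.inl rfl
  · obtain ⟨hu1, hu2, hu3⟩ := pnt_spec hu
    obtain ⟨hv1, hv2, hv3⟩ := pnt_spec hv
    rw [hu1, hv1] at h
    exact (lexGE_cons_diff hu2 hv2 (by omega) (fun hh => hne (by rw [hh]))).1 h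

end


-- ===== batch 7b : restriction, strongly stable finsets, Dset =====
section
variable {d : ℕ} {t : ℕ → ℕ} {n k i : ℕ}

lemma maxVar_le_of {v : Multiset ℕ} {i : ℕ} (h : ∀ a ∈ v, a ≤ i) : maxVar v ≤ i := by
  rcases eq_or_ne v 0 with rfl | hv
  · rw [maxVar_zero]; omega
  · exact h _ (maxVar_mem hv)

lemma maxVar_le_of_Mf {u : Multiset ℕ} (hu : u ∈ Mf d t n k) : maxVar u ≤ n :=
  maxVar_le_of (fun a ha => ((mem_Mf.1 hu).1.2.1 a ha).2)

lemma Mf_filter_eq (hin : i ≤ n) :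
    (Mf d t n k).filter (fun u => maxVar u ≤ i) = Mf d t i k := by
  ext u
  rw [Finset.mem_filter, mem_Mf, mem_Mf]
  constructor
  · rintro ⟨⟨hts, hc⟩, hm⟩
    refine ⟨tspread_restrict hts (fun a ha => le_trans (le_maxVar ha) hm), hc⟩
  · rintro ⟨hts, hc⟩
    have hm : maxVar u ≤ i := maxVar_le_of (fun a ha => (hts.2.1 a ha).2)
    exact ⟨⟨tspread_mono_n hin hts, hc⟩, hm⟩

lemma UC_filter {X : Finset (Multiset ℕ)} (hX : UC d t n k X) (hin : i ≤ n) :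
    UC d t i k (X.filter (fun u => maxVar u ≤ i)) := by
  obtain ⟨hsub, hcl⟩ := hX
  constructor
  · intro u hu
    rw [Finset.mem_filter] at hu
    rw [← Mf_filter_eq hin, Finset.mem_filter]
    exact ⟨hsub hu.1, hu.2⟩
  · intro u hu v hv hge
    rw [Finset.mem_filter] at hu ⊢
    rw [← Mf_filter_eq hin, Finset.mem_filter] at hv
    exact ⟨hcl u hu.1 v hv.1 hge, hv.2⟩

/-- strongly stable finset -/
def SSf (d : ℕ) (t : ℕ → ℕ) (n k : ℕ) (L : Finset (Multiset ℕ)) : Prop :=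
  L ⊆ Mf d t n k ∧ ∀ u ∈ L, ∀ a ∈ u, ∀ j : ℕ, 1 ≤ j → j < a →
    TSpread n d t (j ::ₘ u.erase a) → (j ::ₘ u.erase a) ∈ L

lemma SSf_filter {L : Finset (Multiset ℕ)} (hL : SSf d t n k L) (hin : i ≤ n) :
    SSf d t i k (L.filter (fun u => maxVar u ≤ i)) := by
  obtain ⟨hsub, hss⟩ := hL
  constructor
  · intro u hu
    rw [Finset.mem_filter] at hu
    rw [← Mf_filter_eq hin, Finset.mem_filter]
    exact ⟨hsub hu.1, hu.2⟩
  · intro u hu a ha j hj1 hja hts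
    rw [Finset.mem_filter] at hu ⊢
    refine ⟨hss u hu.1 a ha j hj1 hja (tspread_mono_n hin hts), ?_⟩
    apply maxVar_le_of
    intro b hb
    rcases Multiset.mem_cons.1 hb with rfl | hb'
    · exact le_trans (le_of_lt hja) (le_trans (le_maxVar ha) hu.2)
    · exact le_trans (le_maxVar (Multiset.mem_of_mem_erase hb')) hu.2

/-- parents of the elements of `L` having largest variable `n` -/
noncomputable def Dset (n : ℕ) (L : Finset (Multiset ℕ)) : Finset (Multiset ℕ) :=
  (L.filter (fun u => maxVar u = n)).image pnt

lemma mem_Dset_intro {L : Finset (Multiset ℕ)} {w : Multiset ℕ} (hmax : ∀ i ∈ w, i ≤ n) (h : (n ::ₘ w) ∈ L) : w ∈ Dset n L := by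
  unfold Dset
  rw [Finset.mem_image]
  refine ⟨n ::ₘ w, Finset.mem_filter.2 ⟨h, maxVar_cons_max hmax⟩, pnt_cons hmax⟩

lemma mem_Dset_elim {L : Finset (Multiset ℕ)} {w : Multiset ℕ} (h : w ∈ Dset n L) :
    ∃ u ∈ L, maxVar u = n ∧ pnt u = w := by
  unfold Dset at h
  rw [Finset.mem_image] at h
  rcases h with ⟨u, hu, hw⟩
  rw [Finset.mem_filter] at hu
  exact ⟨u, hu.1, hu.2, hw⟩

lemma card_Dset {L : Finset (Multiset ℕ)} (hL : L ⊆ Mf d t n k) (hk : 1 ≤ k) :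
    (Dset n L).card = (L.filter (fun u => maxVar u = n)).card := by
  unfold Dset
  apply Finset.card_image_of_injOn
  intro u hu u' hu' he
  simp only [Finset.coe_filter, Set.mem_setOf_eq] at hu hu'
  have h0 : u ≠ 0 := mem_of_Mf_pos (hL hu.1) hk
  have h0' : u' ≠ 0 := mem_of_Mf_pos (hL hu'.1) hk
  have e1 := (pnt_spec h0).1
  have e2 := (pnt_spec h0').1
  rw [e1, e2, hu.2, hu'.2, he]

lemma Dset_subset {L : Finset (Multiset ℕ)} (hL : L ⊆ Mf d t n k) (hk : 2 ≤ k) :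
    Dset n L ⊆ Mf d t (n - t (k - 1)) (k - 1) := by
  intro w hw
  rcases mem_Dset_elim hw with ⟨u, hu, hmax, hpnt⟩
  have huM := mem_Mf.1 (hL hu)
  have h0 : u ≠ 0 := mem_of_Mf_pos (hL hu) (by omega)
  obtain ⟨e1, e2, e3⟩ := pnt_spec h0
  rw [hpnt] at e1 e2 e3
  rw [hmax] at e1 e2
  have hts := huM.1
  rw [e1] at hts
  have helim := tspread_cons_max_elim hts e2
  have hw0 : w ≠ 0 := by
    intro hw0
    rw [hw0] at e3
    simp at e3
    omega
  have hcw : Multiset.card w = k - 1 := by omega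
  have hgap := helim.2.1 hw0
  rw [hcw] at hgap
  rw [mem_Mf]
  refine ⟨tspread_restrict helim.1 (fun a ha => ?_), hcw⟩
  have := le_maxVar ha
  omega

lemma Dset_children_subset {L : Finset (Multiset ℕ)} (hL : SSf d t n k L) :
    children d t n (Dset n L) ⊆ L := by
  intro v hv
  rcases mem_children.1 hv with ⟨w, hw, j, hj, rfl⟩
  rcases mem_Dset_elim hw with ⟨u, hu, hmax, hpnt⟩
  have huM := mem_Mf.1 (hL.1 hu)
  rw [mem_valid] at hj
  have h0 : u ≠ 0 := by
    intro h0
    rw [h0] at hmax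
    rw [maxVar_zero] at hmax
    subst hmax
    rcases hj with ⟨⟨h1, h2⟩, -⟩
    omega
  obtain ⟨e1, e2, e3⟩ := pnt_spec h0
  rw [hpnt] at e1 e2
  rw [hmax] at e1 e2
  rcases eq_or_lt_of_le hj.1.2 with rfl | hlt
  · rw [← e1]; exact hu
  · have := hL.2 u hu (maxVar u) (maxVar_mem h0) j hj.1.1 (by omega) ?_
    · rw [hmax] at this
      rw [show u.erase n = w by rw [← hmax, ← hpnt]; rfl] at this
      exact this
    · rw [hmax, show u.erase n = w by rw [← hmax, ← hpnt]; rfl]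
      exact hj.2.2

end


-- ===== batch 8 : more helpers =====
section
variable {d : ℕ} {t : ℕ → ℕ} {n k i : ℕ}

lemma erase_cons_of_mem {w : Multiset ℕ} {a b : ℕ} (ha : a ∈ w) :
    (b ::ₘ w).erase a = b ::ₘ (w.erase a) := by
  rcases eq_or_ne a b with rfl | hab
  · rw [Multiset.erase_cons_head]
    exact (Multiset.cons_erase ha).symm
  · exact Multiset.erase_cons_tail w (Ne.symm hab)

lemma Mf_mono_n {n' : ℕ} (h : n ≤ n') : Mf d t n k ⊆ Mf d t n' k := by
  intro u hu
  rw [mem_Mf] at hu ⊢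
  exact ⟨tspread_mono_n h hu.1, hu.2⟩

lemma Mf_zero : Mf d t n 0 = {0} := by
  ext u
  rw [mem_Mf, Finset.mem_singleton]
  constructor
  · rintro ⟨-, hc⟩
    exact Multiset.card_eq_zero.1 hc
  · rintro rfl
    refine ⟨⟨by simp, by simp, by simp⟩, by simp⟩

lemma pnt_mem' {u : Multiset ℕ} (hu : u ∈ Mf d t n k) (hk : 2 ≤ k) :
    pnt u ∈ Mf d t (n - t (k - 1)) (k - 1) ∧ maxVar (pnt u) + t (k - 1) ≤ maxVar u := by
  have huM := mem_Mf.1 hu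
  have h0 : u ≠ 0 := mem_of_Mf_pos hu (by omega)
  obtain ⟨e1, e2, e3⟩ := pnt_spec h0
  have hts := huM.1
  rw [e1] at hts
  have helim := tspread_cons_max_elim hts e2
  have hw0 : pnt u ≠ 0 := by
    intro hw0
    rw [hw0] at e3
    simp at e3
    omega
  have hcw : Multiset.card (pnt u) = k - 1 := by omega
  have hgap := helim.2.1 hw0
  rw [hcw] at hgap
  have hmaxn : maxVar u ≤ n := maxVar_le_of_Mf hu
  refine ⟨mem_Mf.2 ⟨tspread_restrict helim.1 (fun a ha => ?_), hcw⟩, hgap⟩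
  have := le_maxVar ha
  omega

lemma child_n_mem {v : Multiset ℕ} (hv : v ∈ Mf d t (n - t (k - 1)) (k - 1)) (hk : 2 ≤ k)
    (hkd : k ≤ d) :
    (n ::ₘ v) ∈ Mf d t n k ∧ (∀ a ∈ v, a ≤ n) ∧ maxVar (n ::ₘ v) = n ∧ pnt (n ::ₘ v) = v := by
  have hvM := mem_Mf.1 hv
  have hmv := maxVar_pos_of_Mf hv (by omega)
  have hmax : ∀ a ∈ v, a ≤ n := by
    intro a ha
    have := le_maxVar ha
    omega
  have hts : TSpread n d t (n ::ₘ v) := by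
    apply tspread_cons_max_intro (tspread_mono_n (by omega) hvM.1)
      (by rw [hvM.2]; omega) (by omega) (le_refl n) hmax
    intro _
    rw [hvM.2]
    omega
  refine ⟨mem_Mf.2 ⟨hts, by rw [Multiset.card_cons, hvM.2]; omega⟩, hmax,
    maxVar_cons_max hmax, pnt_cons hmax⟩

/-- D-set of a strongly stable set is strongly stable in the parent space -/
lemma Dset_SS {L : Finset (Multiset ℕ)} (hL : SSf d t n k L) (hk : 2 ≤ k) :
    SSf d t (n - t (k - 1)) (k - 1) (Dset n L) := by
  refine ⟨Dset_subset hL.1 hk, ?_⟩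
  intro w hw a ha j hj1 hja hts
  have hwP := Dset_subset hL.1 hk hw
  rcases mem_Dset_elim hw with ⟨u, hu, hmax, hpnt⟩
  have huM := mem_Mf.1 (hL.1 hu)
  have hkd : k ≤ d := by
    have := huM.1.1
    omega
  have h0 : u ≠ 0 := mem_of_Mf_pos (hL.1 hu) (by omega)
  obtain ⟨e1, e2, e3⟩ := pnt_spec h0
  rw [hpnt] at e1 e2
  rw [hmax] at e1 e2
  -- v = j ::ₘ w.erase a is in the parent space Mf (n - t (k-1)) (k-1)
  have hvM : (j ::ₘ w.erase a) ∈ Mf d t (n - t (k - 1)) (k - 1) := by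
    rw [mem_Mf]
    refine ⟨hts, ?_⟩
    rw [Multiset.card_cons, Multiset.card_erase_of_mem ha]
    have hcw : Multiset.card w = k - 1 := (mem_Mf.1 hwP).2
    have hcpos : 1 ≤ Multiset.card w := by
      rw [hcw]; omega
    rw [hcw]
    have : (k - 1).pred = k - 1 - 1 := rfl
    omega
  obtain ⟨hchild, hmaxv, -, -⟩ := child_n_mem (n := n) hvM hk hkd
  -- apply strong stability of L at u with a
  have han : a ∈ u := by
    rw [e1]
    exact Multiset.mem_cons_of_mem ha
  have herase : u.erase a = n ::ₘ (w.erase a) := by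
    rw [e1]
    exact erase_cons_of_mem ha
  have hLmem := hL.2 u hu a han j hj1 hja (by
    rw [herase, Multiset.cons_swap]
    exact (mem_Mf.1 hchild).1)
  rw [herase, Multiset.cons_swap] at hLmem
  exact mem_Dset_intro hmaxv hLmem

/-- D-set of an upward closed set is upward closed in the parent space -/
lemma Dset_UC {X : Finset (Multiset ℕ)} (hX : UC d t n k X) (hk : 2 ≤ k) (hkd : k ≤ d) :
    UC d t (n - t (k - 1)) (k - 1) (Dset n X) := by
  refine ⟨Dset_subset hX.1 hk, ?_⟩
  intro w hw v hv hge
  rcases mem_Dset_elim hw with ⟨u, hu, hmax, hpnt⟩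
  have h0 : u ≠ 0 := mem_of_Mf_pos (hX.1 hu) (by omega)
  obtain ⟨e1, e2, e3⟩ := pnt_spec h0
  rw [hpnt] at e1 e2
  rw [hmax] at e1 e2
  obtain ⟨hchild, hmaxv, -, -⟩ := child_n_mem (n := n) hv hk hkd
  have hge' : lexGE (n ::ₘ v) u := by
    rcases eq_or_ne v w with rfl | hne
    · rw [e1]; exact Or.inl rfl
    · rw [e1]
      exact (lexGE_cons_diff e2 hmaxv (by
        rw [(mem_Mf.1 hv).2, (mem_Mf.1 (Dset_subset hX.1 hk hw)).2]) (Ne.symm hne)).2 hge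
  exact mem_Dset_intro hmaxv (hX.2 u hu _ hchild hge')

/-- Claim B from the star statement -/
lemma claimB_of_star {L : Finset (Multiset ℕ)} {G : ℕ → ℕ}
    (hstar : ∀ j, ((Top d t n k L.card).filter (fun u => maxVar u ≤ j)).card ≤
      (L.filter (fun u => maxVar u ≤ j)).card)
    (hG : ∀ i, G (i + 1) ≤ G i) (hGn : G (n + 1) = 0) :
    ∑ u ∈ Top d t n k L.card, G (maxVar u) ≤ ∑ u ∈ L, G (maxVar u) :=
  abel_le hG hGn (fun u hu => maxVar_le_of_Mf (top_subset hu)) hstar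

end


-- ===== batch 9 : Lemma C =====
section
variable {d : ℕ} {t : ℕ → ℕ} {n k : ℕ}

lemma lemC {L : Finset (Multiset ℕ)} (hL : SSf d t n k L) (hk : 2 ≤ k)
    (hCB : ∀ (L' : Finset (Multiset ℕ)) (G : ℕ → ℕ),
      SSf d t (n - t (k - 1)) (k - 1) L' →
      (∀ i, G (i + 1) ≤ G i) → G ((n - t (k - 1)) + 1) = 0 →
      ∑ u ∈ Top d t (n - t (k - 1)) (k - 1) L'.card, G (maxVar u) ≤
        ∑ u ∈ L', G (maxVar u)) :
    (L.filter (fun u => maxVar u = n)).card ≤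
      ((Top d t n k L.card).filter (fun u => maxVar u = n)).card := by
  by_contra hcon
  push_neg at hcon
  set T := Top d t n k L.card with hT
  set DT := Dset n T with hDT
  set DL := Dset n L with hDL
  have hTsub : T ⊆ Mf d t n k := top_subset
  have hTUC : UC d t n k T := top_UC
  have hTcard : T.card = L.card := top_card (Finset.card_le_card hL.1)
  have cardDT : DT.card = (T.filter (fun u => maxVar u = n)).card :=
    card_Dset hTsub (by omega)
  have cardDL : DL.card = (L.filter (fun u => maxVar u = n)).card :=
    card_Dset hL.1 (by omega)
  have hlt : DT.card < DL.card := by omega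
  -- extract an element of DL to get arithmetic facts
  have hDLne : DL.Nonempty := Finset.card_pos.1 (by omega)
  obtain ⟨w₀, hw₀⟩ := hDLne
  have hw₀P : w₀ ∈ Mf d t (n - t (k - 1)) (k - 1) := Dset_subset hL.1 hk hw₀
  have hkd : k ≤ d := by
    rcases mem_Dset_elim hw₀ with ⟨u₀, hu₀, -, -⟩
    have h1 := (mem_Mf.1 (hL.1 hu₀)).1.1
    have h2 := (mem_Mf.1 (hL.1 hu₀)).2
    omega
  have hmw₀ := maxVar_pos_of_Mf hw₀P (by omega)
  have htn : t (k - 1) + 1 ≤ n := by omega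
  -- DT is the top segment of its size in the parent space
  have hDTtop : DT = Top d t (n - t (k - 1)) (k - 1) DT.card :=
    UC_eq_top (Dset_UC hTUC hk hkd)
  set E := Top d t (n - t (k - 1)) (k - 1) (DT.card + 1) with hE
  have hDLP : DL.card ≤ (Mf d t (n - t (k - 1)) (k - 1)).card :=
    Finset.card_le_card (Dset_subset hL.1 hk)
  have hEcard : E.card = DT.card + 1 := top_card (by omega)
  have hDTE : DT ⊆ E := by
    rw [hDTtop]
    exact top_mono (by omega)
  have hsd : (E \ DT).card = 1 := by
    rw [Finset.card_sdiff_of_subset hDTE]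
    omega
  obtain ⟨q, hq⟩ := Finset.card_eq_one.1 hsd
  have hqE : q ∈ E := by
    have : q ∈ E \ DT := by rw [hq]; exact Finset.mem_singleton_self q
    exact (Finset.mem_sdiff.1 this).1
  have hqDT : q ∉ DT := by
    have : q ∈ E \ DT := by rw [hq]; exact Finset.mem_singleton_self q
    exact (Finset.mem_sdiff.1 this).2
  have hqP : q ∈ Mf d t (n - t (k - 1)) (k - 1) := top_subset hqE
  have hEins : E = insert q DT := by
    ext a
    rw [Finset.mem_insert]
    constructor
    · intro haE
      by_cases haDT : a ∈ DT
      · exact Or.inr haDT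
      · left
        have : a ∈ E \ DT := Finset.mem_sdiff.2 ⟨haE, haDT⟩
        rw [hq] at this
        exact Finset.mem_singleton.1 this
    · rintro (rfl | haDT)
      · exact hqE
      · exact hDTE haDT
  obtain ⟨hqchild, hqmax, hqmaxv, hqpnt⟩ := child_n_mem hqP hk hkd
  have hnotT : (n ::ₘ q) ∉ T := fun h => hqDT (mem_Dset_intro hqmax h)
  have hqMn : q ∈ Mf d t n (k - 1) := Mf_mono_n (Nat.sub_le n _) hqP
  have hnvalid : n ∈ valid d t n q := by
    apply top_mem_valid hqMn (by omega) (by omega)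
    have := maxVar_le_of_Mf hqP
    omega
  have hchild_mem : (n ::ₘ q) ∈ children d t n E :=
    mem_children.2 ⟨q, hqE, n, hnvalid, rfl⟩
  -- T is contained in (children E) minus the top child of q
  have hTsub2 : T ⊆ (children d t n E).erase (n ::ₘ q) := by
    intro u hu
    have huM : u ∈ Mf d t n k := hTsub hu
    have h0 : u ≠ 0 := mem_of_Mf_pos huM (by omega)
    obtain ⟨e1, e2, e3⟩ := pnt_spec h0
    obtain ⟨hpP, hpgap⟩ := pnt_mem' huM hk
    have hpE : pnt u ∈ E := by
      by_contra hpE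
      have hpDT : pnt u ∉ DT := fun h => hpE (hDTE h)
      have hpq : pnt u ≠ q := by
        rintro h
        rw [h] at hpE
        exact hpE hqE
      have hqp : lexGE q (pnt u) := by
        rcases lexGE_total (pnt u) q with h1 | h1
        · exact absurd (top_UC.2 q hqE (pnt u) hpP h1) hpE
        · exact h1
      have hlex : lexGE (n ::ₘ q) u := by
        rw [e1]
        exact (lexGE_cons_diff e2 hqmax (by
          rw [(mem_Mf.1 hpP).2, (mem_Mf.1 hqP).2]) hpq).2 hqp
      exact hnotT (hTUC.2 u hu _ hqchild hlex)
    have hmu := maxVar_pos_of_Mf huM (by omega)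
    have hvalid : maxVar u ∈ valid d t n (pnt u) := by
      rw [mem_valid]
      refine ⟨⟨hmu.1, hmu.2⟩, e2, ?_⟩
      rw [← e1]
      exact (mem_Mf.1 huM).1
    rw [Finset.mem_erase]
    constructor
    · intro he
      rw [← he] at hnotT
      exact hnotT hu
    · exact mem_children.2 ⟨pnt u, hpE, maxVar u, hvalid, e1⟩
  -- counting
  have c1 : T.card + 1 ≤ (children d t n E).card := by
    have h1 := Finset.card_le_card hTsub2
    have h2 := Finset.card_erase_of_mem hchild_mem
    have h3 : 1 ≤ (children d t n E).card :=
      Finset.card_pos.2 ⟨_, hchild_mem⟩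
    have h4 : ((children d t n E).card).pred = (children d t n E).card - 1 := rfl
    omega
  set G : ℕ → ℕ := fun i => n + 1 - (i + t (k - 1)) with hG
  have sumG : ∀ (X : Finset (Multiset ℕ)), X ⊆ Mf d t (n - t (k - 1)) (k - 1) →
      (children d t n X).card = ∑ w ∈ X, G (maxVar w) := by
    intro X hX
    rw [card_children]
    apply Finset.sum_congr rfl
    intro w hw
    have hwMn : w ∈ Mf d t n (k - 1) := Mf_mono_n (Nat.sub_le n _) (hX hw)
    rw [valid_card_eq hwMn (by omega) (by omega)]
  have c2 : (children d t n E).card = ∑ w ∈ E, G (maxVar w) := sumG E top_subset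
  have c3 : ∑ w ∈ E, G (maxVar w) ≤
      ∑ w ∈ Top d t (n - t (k - 1)) (k - 1) DL.card, G (maxVar w) := by
    apply Finset.sum_le_sum_of_subset
    rw [hE]
    exact top_mono (by omega)
  have c4 : ∑ w ∈ Top d t (n - t (k - 1)) (k - 1) DL.card, G (maxVar w) ≤
      ∑ w ∈ DL, G (maxVar w) := by
    apply hCB DL G (Dset_SS hL hk)
    · intro i
      show n + 1 - (i + 1 + t (k - 1)) ≤ n + 1 - (i + t (k - 1))
      omega
    · show n + 1 - ((n - t (k - 1)) + 1 + t (k - 1)) = 0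
      omega
  have c5 : ∑ w ∈ DL, G (maxVar w) = (children d t n DL).card :=
    (sumG DL (Dset_subset hL.1 hk)).symm
  have c6 : (children d t n DL).card ≤ L.card :=
    Finset.card_le_card (Dset_children_subset hL)
  omega

end


-- ===== batch 10 : the Star theorem =====
section
variable {d : ℕ} {t : ℕ → ℕ}

lemma subset_singleton_card_eq {α : Type*} {a : α} {X Y : Finset α}
    (hX : X ⊆ {a}) (hY : Y ⊆ {a}) (h : X.card = Y.card) : X = Y := by
  rcases Finset.subset_singleton_iff.1 hX with rfl | rfl <;>
    rcases Finset.subset_singleton_iff.1 hY with rfl | rfl <;>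
      simp_all

lemma mem_Mf_one {n : ℕ} {u : Multiset ℕ} :
    u ∈ Mf d t n 1 ↔ ∃ a, u = {a} ∧ 1 ≤ a ∧ a ≤ n ∧ 1 ≤ d := by
  constructor
  · intro hu
    obtain ⟨hts, hc⟩ := mem_Mf.1 hu
    rcases Multiset.card_eq_one.1 hc with ⟨a, rfl⟩
    have := hts.2.1 a (by simp)
    exact ⟨a, rfl, this.1, this.2, by have := hts.1; omega⟩
  · rintro ⟨a, rfl, h1, h2, h3⟩
    rw [mem_Mf]
    refine ⟨⟨by simpa using h3, by simpa using ⟨h1, h2⟩, ?_⟩, by simp⟩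
    intro k hk
    simp at hk

lemma sl_singleton (a : ℕ) : sl ({a} : Multiset ℕ) = [a] := by
  have : (({a} : Multiset ℕ)) = (([a] : List ℕ) : Multiset ℕ) := rfl
  rw [this, sl_of_sorted (List.pairwise_singleton _ a)]

lemma lexGE_singleton {a b : ℕ} : lexGE ({b} : Multiset ℕ) ({a} : Multiset ℕ) ↔ b ≤ a := by
  constructor
  · rintro (he | hlex)
    · exact le_of_eq (Multiset.singleton_inj.1 he)
    · rw [show (({b} : Multiset ℕ).sort (· ≤ ·)) = [b] from sl_singleton b,
        show (({a} : Multiset ℕ).sort (· ≤ ·)) = [a] from sl_singleton a] at hlex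
      cases hlex with
      | rel h => omega
      | cons h => cases h
  · intro h
    rcases eq_or_lt_of_le h with rfl | hlt
    · exact Or.inl rfl
    · right
      rw [show (({b} : Multiset ℕ).sort (· ≤ ·)) = [b] from sl_singleton b,
        show (({a} : Multiset ℕ).sort (· ≤ ·)) = [a] from sl_singleton a]
      exact List.Lex.rel hlt

theorem star : ∀ (k n : ℕ) (L : Finset (Multiset ℕ)), SSf d t n k L → ∀ i,
    ((Top d t n k L.card).filter (fun u => maxVar u ≤ i)).card ≤
      (L.filter (fun u => maxVar u ≤ i)).card := by
  intro k
  induction k using Nat.strong_induction_on with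
  | _ k ihk =>
    intro n
    induction n using Nat.strong_induction_on with
    | _ n ihn =>
      intro L hL i
      have hTcard : (Top d t n k L.card).card = L.card :=
        top_card (Finset.card_le_card hL.1)
      rcases Nat.lt_or_ge i n with hin' | hin
      rotate_left
      · -- full filters
        have hfull : ∀ (X : Finset (Multiset ℕ)), X ⊆ Mf d t n k →
            X.filter (fun u => maxVar u ≤ i) = X := by
          intro X hX
          apply Finset.filter_true_of_mem
          intro u hu
          exact le_trans (maxVar_le_of_Mf (hX hu)) hin
        rw [hfull _ top_subset, hfull _ hL.1, hTcard]
      · -- i < n, so n ≥ 1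
        rcases Nat.lt_or_ge k 2 with hk2 | hk2
        · -- base cases k = 0, 1 : L is itself a top segment
          have hLtop : L = Top d t n k L.card := by
            rcases Nat.lt_or_ge k 1 with hk0 | hk1
            · -- k = 0
              have hk0' : k = 0 := by omega
              subst hk0'
              apply subset_singleton_card_eq (a := (0 : Multiset ℕ))
                (by rw [← Mf_zero (d := d) (t := t) (n := n)]; exact hL.1)
                (by rw [← Mf_zero (d := d) (t := t) (n := n)]; exact top_subset)
                hTcard.symm
            · -- k = 1
              have hk1' : k = 1 := by omega
              subst hk1'
              apply UC_eq_top
              refine ⟨hL.1, ?_⟩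
              intro u hu v hv hge
              rcases mem_Mf_one.1 (hL.1 hu) with ⟨a, rfl, ha1, ha2, hd1⟩
              rcases mem_Mf_one.1 hv with ⟨b, rfl, hb1, hb2, -⟩
              rw [lexGE_singleton] at hge
              rcases eq_or_lt_of_le hge with rfl | hlt
              · exact hu
              · have := hL.2 {a} hu a (by simp) b hb1 hlt (by
                  rw [show ({a} : Multiset ℕ).erase a = 0 from by simp]
                  exact (mem_Mf.1 (mem_Mf_one.2 ⟨b, rfl, hb1, hb2, hd1⟩)).1)
                rw [show ({a} : Multiset ℕ).erase a = 0 from by simp] at this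
                exact this
          rw [← hLtop]
        · -- main case k ≥ 2
          -- split cardinalities by maxVar = n vs ≤ n - 1
          have hsplit : ∀ (X : Finset (Multiset ℕ)), X ⊆ Mf d t n k →
              (X.filter (fun u => maxVar u ≤ n - 1)).card +
                (X.filter (fun u => maxVar u = n)).card = X.card := by
            intro X hX
            have hcg : X.filter (fun u => maxVar u = n) =
                X.filter (fun u => ¬ (maxVar u ≤ n - 1)) := by
              apply Finset.filter_congr
              intro u hu
              have := maxVar_le_of_Mf (hX hu)
              constructor
              · intro h2
                omega
              · intro h2
                omega
            rw [hcg]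
            exact Finset.card_filter_add_card_filter_not
              (s := X) (p := fun u => maxVar u ≤ n - 1)
          have hCB : ∀ (L' : Finset (Multiset ℕ)) (G : ℕ → ℕ),
              SSf d t (n - t (k - 1)) (k - 1) L' →
              (∀ j, G (j + 1) ≤ G j) → G ((n - t (k - 1)) + 1) = 0 →
              ∑ u ∈ Top d t (n - t (k - 1)) (k - 1) L'.card, G (maxVar u) ≤
                ∑ u ∈ L', G (maxVar u) := by
            intro L' G hL' hG hGn
            exact claimB_of_star (fun j => ihk (k - 1) (by omega) (n - t (k - 1)) L' hL' j)
              hG hGn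
          have hlemC := lemC hL hk2 hCB
          have split1 := hsplit (Top d t n k L.card) top_subset
          have split2 := hsplit L hL.1
          have hσTL : ((Top d t n k L.card).filter (fun u => maxVar u ≤ n - 1)).card ≤
              (L.filter (fun u => maxVar u ≤ n - 1)).card := by omega
          -- restrict to n - 1
          set T' := (Top d t n k L.card).filter (fun u => maxVar u ≤ n - 1) with hT'
          set L' := L.filter (fun u => maxVar u ≤ n - 1) with hL'
          have hT'top : T' = Top d t (n - 1) k T'.card :=
            UC_eq_top (UC_filter top_UC (by omega))
          have hL'SS : SSf d t (n - 1) k L' := SSf_filter hL (by omega)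
          have hmono : Top d t (n - 1) k T'.card ⊆ Top d t (n - 1) k L'.card :=
            top_mono hσTL
          have hfi : ∀ (X : Finset (Multiset ℕ)),
              ((X.filter (fun u => maxVar u ≤ n - 1)).filter (fun u => maxVar u ≤ i)) =
                X.filter (fun u => maxVar u ≤ i) := by
            intro X
            rw [Finset.filter_filter]
            apply Finset.filter_congr
            intro u hu
            constructor
            · intro h2
              exact h2.2
            · intro h2
              exact ⟨le_trans h2 (by omega), h2⟩
          calc ((Top d t n k L.card).filter (fun u => maxVar u ≤ i)).card
              = ((T'.filter (fun u => maxVar u ≤ i))).card := by rw [hT', hfi]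
            _ ≤ (((Top d t (n - 1) k L'.card).filter (fun u => maxVar u ≤ i))).card := by
                apply Finset.card_le_card
                apply Finset.filter_subset_filter
                intro x hx
                exact hmono (hT'top ▸ hx)
            _ ≤ ((L'.filter (fun u => maxVar u ≤ i))).card := ihn (n - 1) (by omega) L' hL'SS i
            _ = ((L.filter (fun u => maxVar u ≤ i))).card := by rw [hL', hfi]

end


-- ===== batch 11 : key step and chain =====
section
variable {d : ℕ} {t : ℕ → ℕ} {n : ℕ}

/-- comparing shadows of the top segment and of a strongly stable set -/
lemma children_bound {k : ℕ} {L : Finset (Multiset ℕ)} (hL : SSf d t n k L) :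
    (children d t n (Top d t n k L.card)).card ≤ (children d t n L).card := by
  rcases Nat.lt_or_ge k 1 with hk0 | hk1
  · -- k = 0
    have hk0' : k = 0 := by omega
    subst hk0'
    have : Top d t n 0 L.card = L := by
      apply subset_singleton_card_eq (a := (0 : Multiset ℕ))
        (by rw [← Mf_zero (d := d) (t := t) (n := n)]; exact top_subset)
        (by rw [← Mf_zero (d := d) (t := t) (n := n)]; exact hL.1)
        (top_card (Finset.card_le_card hL.1))
    rw [this]
  · -- k ≥ 1 : via Claim B
    rcases Nat.lt_or_ge d (k + 1) with hd | hd
    · -- degrees too big : all valid sets are empty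
      have hz : ∀ (X : Finset (Multiset ℕ)), X ⊆ Mf d t n k →
          (children d t n X).card = 0 := by
        intro X hX
        rw [card_children]
        apply Finset.sum_eq_zero
        intro w hw
        rw [valid_empty (hX hw) hd]
        rfl
      rw [hz _ top_subset, hz _ hL.1]
    · set G : ℕ → ℕ := fun i => n + 1 - (i + t k) with hG
      have sumG : ∀ (X : Finset (Multiset ℕ)), X ⊆ Mf d t n k →
          (children d t n X).card = ∑ w ∈ X, G (maxVar w) := by
        intro X hX
        rw [card_children]
        apply Finset.sum_congr rfl
        intro w hw
        rw [valid_card_eq (hX hw) hk1 hd]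
      rw [sumG _ top_subset, sumG _ hL.1]
      apply claimB_of_star (fun j => star k n L hL j)
      · intro i
        show n + 1 - (i + 1 + t k) ≤ n + 1 - (i + t k)
        omega
      · show n + 1 - (n + 1 + t k) = 0
        omega

lemma key_step {s : ℕ → ℕ} {k : ℕ}
    (hchild : (children d t n (Top d t n k (s k))).card ≤ s (k + 1))
    {w : Multiset ℕ} {j : ℕ} (hw : w ∈ Top d t n k (s k)) (hmax : ∀ i ∈ w, i ≤ j)
    (hts : TSpread n d t (j ::ₘ w)) (hj1 : 1 ≤ j) (hjn : j ≤ n) :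
    (j ::ₘ w) ∈ Top d t n (k + 1) (s (k + 1)) := by
  have hwM : w ∈ Mf d t n k := top_subset hw
  have hcw : Multiset.card w = k := (mem_Mf.1 hwM).2
  have huM : (j ::ₘ w) ∈ Mf d t n (k + 1) := by
    rw [mem_Mf]
    exact ⟨hts, by rw [Multiset.card_cons, hcw]⟩
  rw [mem_top]
  refine ⟨huM, ?_⟩
  have hsub : (Mf d t n (k + 1)).filter (fun v => lexGE v (j ::ₘ w)) ⊆
      children d t n (Top d t n k (s k)) := by
    intro v hv
    rw [Finset.mem_filter] at hv
    obtain ⟨hvM, hge⟩ := hv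
    have hv0 : v ≠ 0 := mem_of_Mf_pos hvM (by omega)
    
    obtain ⟨e1, e2, e3⟩ := pnt_spec hv0
    have hu0 : (j ::ₘ w) ≠ 0 := by
      intro h0
      exact absurd (congrArg Multiset.card h0) (by simp)
    have hppnt : pnt (j ::ₘ w) = w := pnt_cons hmax
    have hpntv : lexGE (pnt v) w := by
      rw [← hppnt]
      exact lexGE_pnt hu0 hv0 (by
        rw [(mem_Mf.1 huM).2, (mem_Mf.1 hvM).2]) hge
    have hpvM : pnt v ∈ Mf d t n k := by
      rcases Nat.lt_or_ge k 1 with hk0 | hk1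
      · have hk0' : k = 0 := by omega
        subst hk0'
        have : Multiset.card (pnt v) = 0 := by
          have := (mem_Mf.1 hvM).2
          omega
        rw [Mf_zero, Finset.mem_singleton]
        exact Multiset.card_eq_zero.1 this
      · exact Mf_mono_n (Nat.sub_le n _) (pnt_mem' hvM (by omega)).1
    have hpvT : pnt v ∈ Top d t n k (s k) := top_UC.2 w hw (pnt v) hpvM hpntv
    have hmv := maxVar_pos_of_Mf hvM (by omega)
    apply mem_children.2
    refine ⟨pnt v, hpvT, maxVar v, ?_, e1⟩
    rw [mem_valid]
    refine ⟨⟨hmv.1, hmv.2⟩, e2, ?_⟩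
    rw [← e1]
    exact (mem_Mf.1 hvM).1
  calc rank d t n (k + 1) (j ::ₘ w)
      = ((Mf d t n (k + 1)).filter (fun v => lexGE v (j ::ₘ w))).card := rfl
    _ ≤ (children d t n (Top d t n k (s k))).card := Finset.card_le_card hsub
    _ ≤ s (k + 1) := hchild

lemma chain_lemma {s : ℕ → ℕ}
    (hchild : ∀ k, (children d t n (Top d t n k (s k))).card ≤ s (k + 1))
    {u v : Multiset ℕ} {ℓ m : ℕ} (hu : u ∈ Mf d t n ℓ) (hv : v ∈ Top d t n m (s m))
    (hvu : v ≤ u) : u ∈ Top d t n ℓ (s ℓ) := by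
  have hcv : Multiset.card v = m := (mem_Mf.1 (top_subset hv)).2
  have hcu : Multiset.card u = ℓ := (mem_Mf.1 hu).2
  have hml : m ≤ ℓ := by
    have := Multiset.card_le_card hvu
    omega
  -- step A : the m-prefix of u is in Top m
  have htakeM : ∀ r, m + r ≤ ℓ →
      (((sl u).take (m + r) : List ℕ) : Multiset ℕ) ∈ Top d t n (m + r) (s (m + r)) := by
    intro r
    induction r with
    | zero =>
      intro hr
      set w : Multiset ℕ := (((sl u).take m : List ℕ) : Multiset ℕ) with hwdef
      have hwcard : Multiset.card w = m := by
        rw [hwdef, take_card]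
        omega
      have hwM : w ∈ Mf d t n m := by
        rw [mem_Mf]
        exact ⟨tspread_take (mem_Mf.1 hu).1 m, hwcard⟩
      have hptwise : ∀ p, p < (sl w).length → (sl w).getD p 0 ≤ (sl v).getD p 0 := by
        intro p hp
        rw [sl_length, hwcard] at hp
        have e1 : sl w = (sl u).take m := sl_take u m
        have e2 : (sl w).getD p 0 = (sl u).getD p 0 := by
          rw [e1, List.getD_eq_getElem _ 0 (by
              rw [List.length_take, sl_length]; omega),
            List.getD_eq_getElem _ 0 (by rw [sl_length]; omega), List.getElem_take]
        rw [e2]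
        exact getD_sl_le_of_le hvu (by omega)
      have hlen : (sl w).length = (sl v).length := by
        rw [sl_length, sl_length, hwcard, hcv]
      have hge : lexGE w v := by
        rcases lex_of_pointwise (sl w) (sl v) hlen hptwise with he | hlex
        · left
          rw [← sl_coe w, ← sl_coe v, he]
        · exact Or.inr hlex
      simpa using top_UC.2 v hv w (by simpa using hwM) hge
    | succ r ih =>
      intro hr
      have hr' : m + r ≤ ℓ := by omega
      have hwprev := ih hr'
      set a : ℕ := (sl u).getD (m + r) 0 with hadef
      have hlt : m + r < (sl u).length := by
        rw [sl_length]; omega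
      have htake : (sl u).take (m + r + 1) = (sl u).take (m + r) ++ [a] := by
        rw [List.take_succ]
        congr
        rw [List.getElem?_eq_getElem hlt]
        rw [hadef, List.getD_eq_getElem _ 0 hlt]
        rfl
      have hcons : (((sl u).take (m + r + 1) : List ℕ) : Multiset ℕ) =
          a ::ₘ (((sl u).take (m + r) : List ℕ) : Multiset ℕ) := by
        rw [htake]
        rw [← Multiset.coe_add]
        rw [show (([a] : List ℕ) : Multiset ℕ) = {a} from rfl]
        rw [add_comm]
        rfl
      have hmax : ∀ i ∈ (((sl u).take (m + r) : List ℕ) : Multiset ℕ), i ≤ a := by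
        intro i hi
        have hi' : i ∈ (sl u).take (m + r) := by
          rwa [← Multiset.mem_coe]
        rcases List.mem_iff_get.1 hi' with ⟨q, hq⟩
        have hql : (q : ℕ) < m + r :=
          lt_of_lt_of_le q.isLt (by rw [List.length_take]; omega)
        have he : i = (sl u).getD (q : ℕ) 0 := by
          rw [List.getD_eq_getElem _ 0 (by omega), ← hq, List.get_eq_getElem,
            List.getElem_take]
        rw [he, hadef]
        exact sorted_getD_mono (sl_sorted u) (by omega) hlt
      have htsp : TSpread n d t (a ::ₘ (((sl u).take (m + r) : List ℕ) : Multiset ℕ)) := by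
        rw [← hcons]
        exact tspread_take (mem_Mf.1 hu).1 (m + r + 1)
      have han : 1 ≤ a ∧ a ≤ n := by
        apply (mem_Mf.1 hu).1.2.1
        rw [← mem_sl, hadef]
        rw [List.getD_eq_getElem _ 0 hlt]
        exact List.getElem_mem _
      have hidx : m + (r + 1) = m + r + 1 := by omega
      rw [hidx, hcons]
      exact key_step (hchild (m + r)) hwprev hmax htsp han.1 han.2
  have := htakeM (ℓ - m) (by omega)
  rw [show m + (ℓ - m) = ℓ by omega] at this
  rw [show (((sl u).take ℓ : List ℕ) : Multiset ℕ) = u from by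
    rw [← hcu, take_full]] at this
  exact this

end


end KK

namespace KK
open scoped Classical

section
variable {d : ℕ} {t : ℕ → ℕ} {n : ℕ}

lemma mem_Mset_iff_Mf {ℓ : ℕ} {u : Multiset ℕ} :
    u ∈ Mset n d ℓ t ↔ u ∈ Mf d t n ℓ := by
  rw [mem_Mf]
  rfl

lemma Mf_empty {ℓ : ℕ} (h : d < ℓ) : Mf d t n ℓ = ∅ := by
  ext u
  simp only [Finset.notMem_empty, iff_false]
  intro hu
  obtain ⟨hts, hc⟩ := mem_Mf.1 hu
  have := hts.1
  omega

lemma mon_up {J : Set (Multiset ℕ)} (hJ : MonIdeal n J) {v u : Multiset ℕ}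
    (hv : v ∈ J) (hind : ∀ i ∈ u, 1 ≤ i ∧ i ≤ n) (hvu : v ≤ u) : u ∈ J := by
  obtain ⟨r, rfl⟩ := Multiset.le_iff_exists_add.1 hvu
  clear hvu
  induction r using Multiset.induction with
  | empty => simpa using hv
  | cons a r ih =>
    have he : v + (a ::ₘ r) = a ::ₘ (v + r) := by
      rw [← Multiset.singleton_add, ← Multiset.singleton_add, ← add_assoc,
        add_comm v {a}, add_assoc]
    rw [he]
    have ha : a ∈ v + (a ::ₘ r) := by
      rw [Multiset.mem_add]
      exact Or.inr (Multiset.mem_cons_self a r)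
    have haind := hind a ha
    apply hJ.2 (v + r) (ih ?_) a haind.1 haind.2
    intro i hi
    apply hind
    rw [Multiset.mem_add] at hi ⊢
    rcases hi with h1 | h1
    · exact Or.inl h1
    · exact Or.inr (Multiset.mem_cons_of_mem h1)

theorem main (hI : MonIdeal n I) (hgen : TSpreadGen n d t I)
    (hss : ∀ ℓ : ℕ, StronglyStableSet n d t (I ∩ Mset n d ℓ t)) :
    ∃! J : Set (Multiset ℕ),
      MonIdeal n J ∧ TSpreadGen n d t J ∧
        (∀ ℓ : ℕ, LexSet n d ℓ t (J ∩ Mset n d ℓ t)) ∧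
        ∀ ℓ ≤ d, (I ∩ Mset n d ℓ t).ncard = (J ∩ Mset n d ℓ t).ncard := by
  classical
  set Lf : ℕ → Finset (Multiset ℕ) := fun ℓ => (Mf d t n ℓ).filter (· ∈ I) with hLfdef
  set sf : ℕ → ℕ := fun ℓ => (Lf ℓ).card with hsfdef
  have hpieceF : ∀ (K : Set (Multiset ℕ)) (ℓ : ℕ),
      K ∩ Mset n d ℓ t = ↑((Mf d t n ℓ).filter (· ∈ K)) := by
    intro K ℓ
    ext u
    simp only [Set.mem_inter_iff, Finset.coe_filter, Set.mem_setOf_eq]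
    rw [mem_Mset_iff_Mf]
    tauto
  have hIpiece : ∀ ℓ, I ∩ Mset n d ℓ t = ↑(Lf ℓ) := fun ℓ => hpieceF I ℓ
  have hIncard : ∀ ℓ, (I ∩ Mset n d ℓ t).ncard = sf ℓ := by
    intro ℓ
    rw [hIpiece ℓ, Set.ncard_coe_finset]
  have hSS : ∀ ℓ, SSf d t n ℓ (Lf ℓ) := by
    intro ℓ
    constructor
    · exact Finset.filter_subset _ _
    · intro u hu a ha j h1 h2 hts
      have hu' : u ∈ I ∩ Mset n d ℓ t := by
        rw [hIpiece ℓ]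
        exact hu
      have := hss ℓ u hu' a ha j h1 h2 hts
      rw [hIpiece ℓ] at this
      exact this
  have hchild : ∀ k, (children d t n (Top d t n k (sf k))).card ≤ sf (k + 1) := by
    intro k
    have h1 : (children d t n (Top d t n k (sf k))).card ≤
        (children d t n (Lf k)).card := children_bound (hSS k)
    have h2 : children d t n (Lf k) ⊆ Lf (k + 1) := by
      intro v hv
      rcases mem_children.1 hv with ⟨w, hw, j, hj, rfl⟩
      rw [mem_valid] at hj
      rw [hLfdef] at hw ⊢
      rw [Finset.mem_filter] at hw ⊢
      constructor
      · rw [mem_Mf]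
        exact ⟨hj.2.2, by rw [Multiset.card_cons, (mem_Mf.1 hw.1).2]⟩
      · exact hI.2 w hw.2 j hj.1.1 hj.1.2
    exact le_trans h1 (Finset.card_le_card h2)
  set J : Set (Multiset ℕ) :=
    {u | (∀ i ∈ u, 1 ≤ i ∧ i ≤ n) ∧ ∃ m v, v ∈ Top d t n m (sf m) ∧ v ≤ u} with hJdef
  have hJpiece : ∀ ℓ, J ∩ Mset n d ℓ t = ↑(Top d t n ℓ (sf ℓ)) := by
    intro ℓ
    ext u
    constructor
    · rintro ⟨⟨hind, m, v, hvT, hvu⟩, huM⟩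
      rw [mem_Mset_iff_Mf] at huM
      exact chain_lemma hchild huM hvT hvu
    · intro hu
      rw [Finset.mem_coe] at hu
      have huM := top_subset hu
      constructor
      · exact ⟨fun i hi => (mem_Mf.1 huM).1.2.1 i hi, ℓ, u, hu, le_refl u⟩
      · rw [mem_Mset_iff_Mf]
        exact huM
  have hJcard : ∀ ℓ, (J ∩ Mset n d ℓ t).ncard = sf ℓ := by
    intro ℓ
    rw [hJpiece ℓ, Set.ncard_coe_finset]
    exact top_card (Finset.card_le_card (Finset.filter_subset _ _))
  refine ⟨J, ⟨?_, ?_, ?_, ?_⟩, ?_⟩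
  · -- MonIdeal
    constructor
    · exact fun u hu => hu.1
    · intro u hu i h1 h2
      obtain ⟨hind, m, v, hvT, hvu⟩ := hu
      refine ⟨?_, m, v, hvT, le_trans hvu (Multiset.le_cons_self u i)⟩
      intro b hb
      rcases Multiset.mem_cons.1 hb with rfl | hb'
      · exact ⟨h1, h2⟩
      · exact hind b hb'
  · -- TSpreadGen
    intro u hu
    obtain ⟨hind, m, v, hvT, hvu⟩ := hu
    have hvM := top_subset hvT
    refine ⟨v, ⟨fun i hi => (mem_Mf.1 hvM).1.2.1 i hi, m, v, hvT, le_refl v⟩,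
      (mem_Mf.1 hvM).1, hvu⟩
  · -- LexSet
    intro ℓ u hu v hv hge
    rw [hJpiece ℓ] at hu ⊢
    rw [Finset.mem_coe] at hu ⊢
    rw [mem_Mset_iff_Mf] at hv
    exact top_UC.2 u hu v hv hge
  · -- cardinalities
    intro ℓ _
    rw [hIncard ℓ, hJcard ℓ]
  · -- uniqueness
    intro J' hJ'
    obtain ⟨hJ'mon, hJ'gen, hJ'lex, hJ'card⟩ := hJ'
    have hJ'piece : ∀ ℓ, J' ∩ Mset n d ℓ t = ↑(Top d t n ℓ (sf ℓ)) := by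
      intro ℓ
      set L' : Finset (Multiset ℕ) := (Mf d t n ℓ).filter (· ∈ J') with hL'def
      have hp : J' ∩ Mset n d ℓ t = ↑L' := hpieceF J' ℓ
      have hUC : UC d t n ℓ L' := by
        constructor
        · exact Finset.filter_subset _ _
        · intro u hu v hv hge
          have hu' : u ∈ J' ∩ Mset n d ℓ t := by rw [hp]; exact hu
          have hv' : v ∈ Mset n d ℓ t := mem_Mset_iff_Mf.2 hv
          have := hJ'lex ℓ u hu' v hv' hge
          rw [hp] at this
          exact this
      have hcard : L'.card = sf ℓ := by
        rcases Nat.lt_or_ge d ℓ with hdl | hdl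
        · have he : Mf d t n ℓ = ∅ := Mf_empty hdl
          have h1 : L' = ∅ := by
            rw [hL'def, he]
            rfl
          have h2 : Lf ℓ = ∅ := by
            rw [hLfdef]
            show (Mf d t n ℓ).filter (· ∈ I) = ∅
            rw [he]
            rfl
          rw [h1, hsfdef]
          show 0 = (Lf ℓ).card
          rw [h2]
          rfl
        · have := hJ'card ℓ hdl
          rw [hIncard ℓ, hp, Set.ncard_coe_finset] at this
          omega
      rw [hp, UC_eq_top hUC, hcard]
    apply Set.eq_of_subset_of_subset
    · -- J' ⊆ J
      intro u hu
      obtain ⟨v, hvJ', hvts, hvu⟩ := hJ'gen u hu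
      have hv' : v ∈ J' ∩ Mset n d (Multiset.card v) t :=
        ⟨hvJ', by rw [mem_Mset_iff_Mf, mem_Mf]; exact ⟨hvts, rfl⟩⟩
      rw [hJ'piece _] at hv'
      exact ⟨hJ'mon.1 u hu, Multiset.card v, v, Finset.mem_coe.1 hv', hvu⟩
    · -- J ⊆ J'
      rintro u ⟨hind, m, v, hvT, hvu⟩
      have hv' : v ∈ J' := by
        have : v ∈ J' ∩ Mset n d m t := by
          rw [hJ'piece m]
          exact hvT
        exact this.1
      exact mon_up hJ'mon hv' hind hvu

end

end KK

/-- for any t-spread strongly stable ideal `I` there is a unique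
t-spread lex ideal `J` with the same `f_t`-vector, i.e.
`|[I_ℓ]_t| = |[J_ℓ]_t|` for all `0 ≤ ℓ ≤ d`. -/
theorem stmt7 (n d : ℕ) (t : ℕ → ℕ) (hd : 2 ≤ d) (I : Set (Multiset ℕ))
    (hI : MonIdeal n I) (hgen : TSpreadGen n d t I)
    (hss : ∀ ℓ : ℕ, StronglyStableSet n d t (I ∩ Mset n d ℓ t)) :
    ∃! J : Set (Multiset ℕ),
      MonIdeal n J ∧ TSpreadGen n d t J ∧
        (∀ ℓ : ℕ, LexSet n d ℓ t (J ∩ Mset n d ℓ t)) ∧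
        ∀ ℓ ≤ d, (I ∩ Mset n d ℓ t).ncard = (J ∩ Mset n d ℓ t).ncard := KK.main hI hgen hss
end

section
/- Let u = x_{i_1}···x_{i_ℓ} ∈ M_{n,ℓ,t}. Then the complement of the initial t-spread lexsegment determined by u satisfies M_{n,ℓ,t} \ L_t^i(u) = ⋃_{k=1}^{ℓ} x_{i_1}···x_{i_{k-1}} · M_{[i_k+1, n], ℓ-(k-1), t_{≥k}}, and this union is disjoint. -/
open Multiset Finset

section Stmt9Aux

private lemma sortCoe (l : List ℕ) (h : l.Pairwise (· ≤ ·)) :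
    Multiset.sort (↑l : Multiset ℕ) (· ≤ ·) = l :=
  List.Perm.eq_of_pairwise' (r := (· ≤ ·)) (Multiset.pairwise_sort _ _) h
    (Multiset.coe_eq_coe.mp (Multiset.sort_eq (↑l : Multiset ℕ) (· ≤ ·)))

private lemma lexDecomp {l1 l2 : List ℕ} (h : List.Lex (· < ·) l1 l2) :
    (∃ l', l2 = l1 ++ l' ∧ l' ≠ []) ∨
      ∃ p a b t1 t2, l1 = p ++ a :: t1 ∧ l2 = p ++ b :: t2 ∧ a < b := by
  induction h with
  | nil => exact Or.inl ⟨_, rfl, List.cons_ne_nil _ _⟩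
  | @rel a l1 b l2 hab => exact Or.inr ⟨[], a, b, l1, l2, rfl, rfl, hab⟩
  | @cons a l1 l2 h ih =>
    rcases ih with ⟨l', rfl, hne⟩ | ⟨p, x, y, t1, t2, h1, h2, hxy⟩
    · exact Or.inl ⟨l', rfl, hne⟩
    · exact Or.inr ⟨a :: p, x, y, t1, t2, by simp [h1], by simp [h2], hxy⟩

private lemma lexAppendCons (p : List ℕ) {a b : ℕ} (t1 t2 : List ℕ) (hab : a < b) :
    List.Lex (· < ·) (p ++ a :: t1) (p ++ b :: t2) := by
  induction p with
  | nil => exact List.Lex.rel hab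
  | cons c p ih => exact List.Lex.cons ih

private lemma notLexAppendCons (p : List ℕ) {a b : ℕ} (t1 t2 : List ℕ) (hab : a < b) :
    ¬ List.Lex (· < ·) (p ++ b :: t1) (p ++ a :: t2) := by
  induction p with
  | nil =>
    intro h
    cases h with
    | cons => omega
    | rel h => omega
  | cons c p ih =>
    intro h
    cases h with
    | cons h => exact ih h
    | rel h => exact absurd h (lt_irrefl c)

end Stmt9Aux

/-- for `u = x_{i_1}⋯x_{i_ℓ} ∈ M_{n,ℓ,t}`,
`M_{n,ℓ,t} \ L_t^i(u) = ⋃_{k=1}^{ℓ} x_{i_1}⋯x_{i_{k-1}} · M_{[i_k+1,n], ℓ-(k-1), t_{≥k}}`,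
and this union is disjoint. -/
theorem stmt9 (n d ℓ : ℕ) (t : ℕ → ℕ) (hd : 2 ≤ d) (hℓ1 : 1 ≤ ℓ) (hℓd : ℓ ≤ d)
    (idx : ℕ → ℕ) (u : Multiset ℕ)
    (hu : u = (Finset.Icc 1 ℓ).val.map idx)
    (hmono : ∀ k, 1 ≤ k → k < ℓ → idx k + t k ≤ idx (k + 1))
    (huM : u ∈ Mset n d ℓ t) :
    ∀ F : ℕ → Set (Multiset ℕ),
      (∀ k, F k =
        (fun w => ((Finset.Icc 1 (k - 1)).val.map idx) + w) ''
          {w | w ∈ Mset n (d - (k - 1)) (ℓ - (k - 1)) (fun m => t (m + (k - 1))) ∧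
               ∀ a ∈ w, idx k + 1 ≤ a}) →
      (Mset n d ℓ t \ {v ∈ Mset n d ℓ t | lexGE v u} =
          ⋃ k ∈ Finset.Icc 1 ℓ, F k) ∧
        ∀ k ∈ Finset.Icc 1 ℓ, ∀ k' ∈ Finset.Icc 1 ℓ, k ≠ k' →
          Disjoint (F k) (F k') := by
  intro F hF
  -- the sorted list of the prefix monomial
  have hPlen : ∀ m : ℕ, ((List.range' 1 m).map idx).length = m := by
    intro m; simp
  have hPget : ∀ m j : ℕ, j < m → ((List.range' 1 m).map idx).getD j 0 = idx (j + 1) := by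
    intro m j hj
    have hj' : j < ((List.range' 1 m).map idx).length := by rw [hPlen]; exact hj
    rw [List.getD_eq_getElem _ _ hj']
    simp only [List.getElem_map, List.getElem_range']
    exact congrArg idx (by omega)
  have hcoe : ∀ m : ℕ, ((Finset.Icc 1 m).val.map idx : Multiset ℕ)
      = ↑((List.range' 1 m).map idx) := by
    intro m
    rw [Nat.Icc_eq_range']
    simp [Nat.add_sub_cancel]
  have hmon2 : ∀ b a : ℕ, 1 ≤ a → a ≤ b → b ≤ ℓ → idx a ≤ idx b := by
    intro b
    induction b with
    | zero => intro a h1 h2 _; omega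
    | succ b ih =>
      intro a h1 h2 h3
      rcases Nat.eq_or_lt_of_le h2 with h | h
      · rw [h]
      · have hab : idx a ≤ idx b := ih a h1 (by omega) (by omega)
        have := hmono b (by omega) (by omega)
        omega
  have hPsorted : ∀ m : ℕ, m ≤ ℓ → ((List.range' 1 m).map idx).Pairwise (· ≤ ·) := by
    intro m hm
    rw [List.pairwise_iff_getElem]
    intro i j hi hj hij
    simp only [List.length_map, List.length_range'] at hi hj
    simp only [List.getElem_map, List.getElem_range']
    exact hmon2 _ _ (by omega) (by omega) (by omega)
  have huM' : TSpread n d t u ∧ u.card = ℓ := huM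
  have hidxmem : ∀ j : ℕ, 1 ≤ j → j ≤ ℓ → 1 ≤ idx j ∧ idx j ≤ n := by
    intro j h1 h2
    have hjm : idx j ∈ u := by
      rw [hu]
      exact Multiset.mem_map_of_mem _ (Finset.mem_val.mpr (Finset.mem_Icc.mpr ⟨h1, h2⟩))
    exact huM'.1.2.1 _ hjm
  have hsu : Multiset.sort u (· ≤ ·) = (List.range' 1 ℓ).map idx := by
    rw [hu, hcoe]; exact sortCoe _ (hPsorted ℓ le_rfl)
  have hsplit : ∀ k : ℕ, 1 ≤ k → k ≤ ℓ → (List.range' 1 ℓ).map idx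
      = (List.range' 1 (k - 1)).map idx ++ idx k :: (List.range' (k + 1) (ℓ - k)).map idx := by
    intro k h1 h2
    have e1 : List.range' 1 (k - 1) ++ List.range' k (ℓ - (k - 1)) = List.range' 1 ℓ := by
      have h := List.range'_append_1 (s := 1) (m := k - 1) (n := ℓ - (k - 1))
      rw [show 1 + (k - 1) = k by omega, show k - 1 + (ℓ - (k - 1)) = ℓ by omega] at h
      exact h
    have e2 : List.range' k (ℓ - (k - 1)) = k :: List.range' (k + 1) (ℓ - k) := by
      rw [show ℓ - (k - 1) = (ℓ - k) + 1 by omega, List.range'_succ]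
    rw [← e1, e2, List.map_append, List.map_cons]
  -- Key: every element of `F k` lies in `Mset` and its sorted list decomposes
  have key : ∀ k, 1 ≤ k → k ≤ ℓ → ∀ v ∈ F k,
      v ∈ Mset n d ℓ t ∧ ∃ b l', Multiset.sort v (· ≤ ·)
        = (List.range' 1 (k - 1)).map idx ++ b :: l' ∧ idx k < b := by
    intro k hk1 hk2 v hv
    rw [hF k] at hv
    obtain ⟨w, hw, rfl⟩ := hv
    have hwM : TSpread n (d - (k - 1)) (fun m => t (m + (k - 1))) w ∧ w.card = ℓ - (k - 1) :=
      hw.1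
    have hwge : ∀ a ∈ w, idx k + 1 ≤ a := hw.2
    set m := k - 1 with hm
    set lw := Multiset.sort w (· ≤ ·) with hlwdef
    have hlww : (↑lw : Multiset ℕ) = w := Multiset.sort_eq _ _
    have hlwlen : lw.length = ℓ - m := by
      rw [hlwdef, Multiset.length_sort, hwM.2]
    have hlwsorted : lw.Pairwise (· ≤ ·) := Multiset.pairwise_sort _ _
    have hlwmem : ∀ a ∈ lw, a ∈ w := fun a ha => (Multiset.mem_sort _).mp ha
    have hsorted : (((List.range' 1 m).map idx) ++ lw).Pairwise (· ≤ ·) := by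
      rw [List.pairwise_append]
      refine ⟨hPsorted m (by omega), hlwsorted, ?_⟩
      intro x hx y hy
      obtain ⟨j, hj, rfl⟩ := List.mem_map.mp hx
      have hj' := List.mem_range'_1.mp hj
      have h1 : idx j ≤ idx k := hmon2 k j (by omega) (by omega) (by omega)
      have h2 : idx k + 1 ≤ y := hwge y (hlwmem y hy)
      omega
    have hveq : ((Finset.Icc 1 (k - 1)).val.map idx + w : Multiset ℕ)
        = ↑(((List.range' 1 m).map idx) ++ lw) := by
      rw [hcoe, ← hlww, Multiset.coe_add]
    have hsv : Multiset.sort ((Finset.Icc 1 (k - 1)).val.map idx + w) (· ≤ ·)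
        = ((List.range' 1 m).map idx) ++ lw := by
      rw [hveq]; exact sortCoe _ hsorted
    have hcardv : ((Finset.Icc 1 (k - 1)).val.map idx + w : Multiset ℕ).card = ℓ := by
      rw [Multiset.card_add, hcoe, Multiset.coe_card, hPlen, hwM.2]
      omega
    have hlwne : lw ≠ [] := by
      intro h
      rw [h] at hlwlen
      simp at hlwlen
      omega
    obtain ⟨b, l', hbl⟩ := List.exists_cons_of_ne_nil hlwne
    have hbmem : b ∈ w := hlwmem b (by rw [hbl]; exact List.mem_cons_self)
    have hbk : idx k < b := by have := hwge b hbmem; omega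
    refine ⟨⟨⟨?_, ?_, ?_⟩, hcardv⟩, b, l', by rw [hsv, hbl], hbk⟩
    · rw [hcardv]; exact hℓd
    · intro i hi
      rcases Multiset.mem_add.mp hi with hi | hi
      · rw [hcoe] at hi
        obtain ⟨j, hj, rfl⟩ := List.mem_map.mp (Multiset.mem_coe.mp hi)
        have hj' := List.mem_range'_1.mp hj
        exact hidxmem j (by omega) (by omega)
      · exact hwM.1.2.1 i hi
    · intro j hj
      rw [hcardv] at hj
      rw [hsv]
      by_cases hc1 : j + 1 < m
      · rw [List.getD_append _ _ _ _ (by rw [hPlen]; omega),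
          List.getD_append _ _ _ _ (by rw [hPlen]; omega),
          hPget m j (by omega), hPget m (j + 1) (by omega)]
        exact hmono (j + 1) (by omega) (by omega)
      · by_cases hc2 : j + 1 = m
        · rw [List.getD_append _ _ _ _ (by rw [hPlen]; omega),
            List.getD_append_right _ _ _ _ (by rw [hPlen]; omega),
            hPget m j (by omega), hPlen]
          have hz : (j + 1) - m = 0 := by omega
          rw [hz, hbl]
          have h0 : (b :: l').getD 0 0 = b := rfl
          rw [h0]
          have h1 := hmono m (by omega) (by omega)
          have hk' : m + 1 = k := by omega
          rw [hk'] at h1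
          rw [show j + 1 = m from hc2]
          omega
        · -- j ≥ m
          have hjm : m ≤ j := by omega
          rw [List.getD_append_right _ _ _ _ (by rw [hPlen]; omega),
            List.getD_append_right _ _ _ _ (by rw [hPlen]; omega), hPlen]
          have hs := hwM.1.2.2 (j - m) (by rw [hwM.2]; omega)
          rw [← hlwdef] at hs
          simp only at hs
          have e1 : j - m + 1 = j + 1 - m := by omega
          rw [e1] at hs
          rw [show j + 1 - m + m = j + 1 by omega] at hs
          exact hs
  constructor
  · ext v
    simp only [Set.mem_diff, Set.mem_sep_iff, Set.mem_iUnion, Finset.mem_Icc, exists_prop]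
    constructor
    · rintro ⟨hvM, hvL⟩
      have hvM' : TSpread n d t v ∧ v.card = ℓ := hvM
      have hnlex : ¬ lexGE v u := fun h => hvL ⟨hvM, h⟩
      have hvne : v ≠ u := fun h => hnlex (Or.inl h)
      have hsune : Multiset.sort v (· ≤ ·) ≠ Multiset.sort u (· ≤ ·) := by
        intro h
        apply hvne
        rw [← Multiset.sort_eq v (· ≤ ·), ← Multiset.sort_eq u (· ≤ ·), h]
      have hnl2 : ¬ List.Lex (· < ·) (Multiset.sort v (· ≤ ·)) (Multiset.sort u (· ≤ ·)) :=
        fun h => hnlex (Or.inr h)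
      have hinst : Std.Trichotomous (List.Lex (· < ·) : List ℕ → List ℕ → Prop) := inferInstance
      have hlex : List.Lex (· < ·) (Multiset.sort u (· ≤ ·)) (Multiset.sort v (· ≤ ·)) := by
        rcases trichotomous (r := List.Lex (· < ·)) (Multiset.sort v (· ≤ ·))
          (Multiset.sort u (· ≤ ·)) with h | h | h
        · exact absurd h hnl2
        · exact absurd h hsune
        · exact h
      have hlenv : (Multiset.sort v (· ≤ ·)).length = ℓ := by
        rw [Multiset.length_sort, hvM'.2]
      have hlenu : (Multiset.sort u (· ≤ ·)).length = ℓ := by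
        rw [Multiset.length_sort, huM'.2]
      rcases lexDecomp hlex with ⟨l', hl', hne⟩ | ⟨p, a, b, t1, t2, h1, h2, hab⟩
      · exfalso
        have hc := congrArg List.length hl'
        rw [List.length_append, hlenv, hlenu] at hc
        have := List.length_pos_iff.mpr hne
        omega
      · set m := p.length with hmdef
        have hmℓ : m < ℓ := by
          have hc := congrArg List.length h1
          rw [List.length_append, List.length_cons, hlenu] at hc
          omega
        have hsp := hsplit (m + 1) (by omega) (by omega)
        simp only [Nat.add_sub_cancel] at hsp
        have hpq : p ++ a :: t1
            = (List.range' 1 m).map idx ++ idx (m + 1)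
                :: (List.range' (m + 2) (ℓ - (m + 1))).map idx := by
          rw [← h1, hsu, hsp]
        have hlen_eq : p.length = ((List.range' 1 m).map idx).length := by
          rw [hPlen]
        obtain ⟨hpP, htail⟩ := List.append_inj hpq hlen_eq
        have ha : a = idx (m + 1) := by
          have := htail
          injection this
        have hsv_sorted := Multiset.pairwise_sort v (· ≤ ·)
        have hbt2sorted : (b :: t2).Pairwise (· ≤ ·) := by
          have h := hsv_sorted
          rw [h2, List.pairwise_append] at h
          exact h.2.1
        have hsort_bt2 : Multiset.sort (↑(b :: t2) : Multiset ℕ) (· ≤ ·) = b :: t2 :=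
          sortCoe _ hbt2sorted
        have hlent2 : t2.length + 1 = ℓ - m := by
          have hc := congrArg List.length h2
          rw [List.length_append, List.length_cons, hlenv] at hc
          omega
        have hcardbt2 : (↑(b :: t2) : Multiset ℕ).card = ℓ - m := by
          rw [Multiset.coe_card, List.length_cons]
          exact hlent2
        refine ⟨m + 1, ⟨by omega, by omega⟩, ?_⟩
        rw [hF (m + 1)]
        simp only [Nat.add_sub_cancel]
        refine ⟨↑(b :: t2), ⟨⟨⟨?_, ?_, ?_⟩, hcardbt2⟩, ?_⟩, ?_⟩
        · rw [hcardbt2]; omega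
        · intro i hi
          have hiv : i ∈ v := by
            rw [← Multiset.mem_sort (r := (· ≤ ·)), h2]
            exact List.mem_append_right _ (Multiset.mem_coe.mp hi)
          exact hvM'.1.2.1 i hiv
        · intro j hj
          rw [hcardbt2] at hj
          rw [hsort_bt2]
          have hs := hvM'.1.2.2 (m + j) (by rw [hvM'.2]; omega)
          rw [h2] at hs
          rw [List.getD_append_right _ _ _ _ (by omega : p.length ≤ m + j),
            List.getD_append_right _ _ _ _ (by omega : p.length ≤ m + j + 1)] at hs
          have e1 : m + j - p.length = j := by omega
          have e2 : m + j + 1 - p.length = j + 1 := by omega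
          rw [e1, e2] at hs
          simp only
          have e3 : j + 1 + m = m + j + 1 := by omega
          rw [e3]
          exact hs
        · intro x hx
          rcases List.mem_cons.mp (Multiset.mem_coe.mp hx) with rfl | hx'
          · rw [← ha]; omega
          · have hbx : b ≤ x := List.rel_of_pairwise_cons hbt2sorted hx'
            rw [← ha]; omega
        · show Multiset.map idx (Finset.Icc 1 m).val + (↑(b :: t2) : Multiset ℕ) = v
          rw [hcoe, Multiset.coe_add, ← hpP, ← h2]
          exact Multiset.sort_eq _ _
    · rintro ⟨k, ⟨hk1, hk2⟩, hvF⟩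
      obtain ⟨hvM, b, l', hsv, hb⟩ := key k hk1 hk2 v hvF
      refine ⟨hvM, ?_⟩
      rintro ⟨-, hlex⟩
      rcases hlex with heq | hl
      · rw [heq, hsu, hsplit k hk1 hk2] at hsv
        have hteq := List.append_cancel_left hsv
        have : idx k = b := by injection hteq
        omega
      · rw [hsv, hsu, hsplit k hk1 hk2] at hl
        exact notLexAppendCons _ _ _ hb hl
  · intro k hk k' hk' hne
    simp only [Finset.mem_Icc] at hk hk'
    have haux : ∀ k k', 1 ≤ k → k ≤ ℓ → 1 ≤ k' → k' ≤ ℓ → k < k' →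
        ∀ v, v ∈ F k → v ∈ F k' → False := by
      intro k k' hk1 hk2 hk1' hk2' hlt v hv hv'
      obtain ⟨_, b, l1, hsv, hb⟩ := key k hk1 hk2 v hv
      obtain ⟨_, b', l2, hsv', hb'⟩ := key k' hk1' hk2' v hv'
      have h1 : (Multiset.sort v (· ≤ ·)).getD (k - 1) 0 = b := by
        rw [hsv, List.getD_append_right _ _ _ _ (by rw [hPlen])]
        rw [hPlen, Nat.sub_self]
        rfl
      have h2 : (Multiset.sort v (· ≤ ·)).getD (k - 1) 0 = idx k := by
        rw [hsv', List.getD_append _ _ _ _ (by rw [hPlen]; omega),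
          hPget (k' - 1) (k - 1) (by omega)]
        exact congrArg idx (by omega)
      omega
    rw [Set.disjoint_left]
    intro v hv hv'
    rcases Nat.lt_or_ge k k' with h | h
    · exact haux k k' hk.1 hk.2 hk'.1 hk'.2 h v hv hv'
    · have h' : k' < k := by omega
      exact haux k' k hk'.1 hk'.2 hk.1 hk.2 h' v hv' hv
end

section
/- Let u = x_{i_1}···x_{i_ℓ} ∈ M_{n,ℓ,t}. Then |M_{n,ℓ,t} \ L_t^i(u)| = Σ_{j=1}^{ℓ} C(a_j, j), where a_j = n - i_{ℓ-(j-1)} + j - 1 - Σ_{h=ℓ-(j-1)}^{ℓ-1} t_h, and this is the Macaulay (binomial) expansion of this cardinality with respect to ℓ: a_ℓ > a_{ℓ-1} > ... > a_p ≥ p and a_j < j for j < p, where p = min{j : a_j ≥ j}. -/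
open Multiset Finset

namespace Stmt10Aux


/-- Hockey-stick style summation. -/
lemma hockey (c m : ℕ) (hm : 1 ≤ m) : ∀ b a : ℕ,
    ∑ j ∈ Finset.Icc a b, (c - j).choose m
      = (c + 1 - a).choose (m + 1) - (c - b).choose (m + 1) := by
  intro b
  induction b with
  | zero =>
    intro a
    rcases Nat.eq_zero_or_pos a with rfl | ha
    · simp only [Finset.Icc_self, Finset.sum_singleton, Nat.sub_zero]
      rw [Nat.choose_succ_succ' c m]
      omega
    · rw [Finset.Icc_eq_empty (by omega), Finset.sum_empty, eq_comm,
        Nat.sub_eq_zero_iff_le]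
      exact Nat.choose_le_choose _ (by omega)
  | succ b ih =>
    intro a
    by_cases hab : a ≤ b + 1
    · rw [Finset.sum_Icc_succ_top hab, ih a]
      have hmono : (c - b).choose (m + 1) ≤ (c + 1 - a).choose (m + 1) :=
        Nat.choose_le_choose _ (by omega)
      rcases le_or_gt c b with hcb | hcb
      · have h1 : c - b = 0 := by omega
        have h2 : c - (b + 1) = 0 := by omega
        rw [h1, h2]
        simp [Nat.choose_eq_zero_of_lt (by omega : 0 < m),
          Nat.choose_eq_zero_of_lt (by omega : 0 < m + 1)]
      · have h1 : c - b = (c - (b + 1)) + 1 := by omega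
        have hpas : (c - b).choose (m + 1)
            = (c - (b + 1)).choose m + (c - (b + 1)).choose (m + 1) := by
          rw [h1, Nat.choose_succ_succ']
        omega
    · rw [Finset.Icc_eq_empty (by omega), Finset.sum_empty, eq_comm,
        Nat.sub_eq_zero_iff_le]
      exact Nat.choose_le_choose _ (by omega)

/-- Finset of t-spread lists of length `m`, entries `≤ n`, first entry `≥ a`. -/
def SL (n : ℕ) : ℕ → (ℕ → ℕ) → ℕ → Finset (List ℕ)
  | 0, _, _ => {[]}
  | m + 1, t, a =>
    (Finset.Icc a n).biUnion fun j =>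
      (SL n m (fun h => t (h + 1)) (j + t 1)).image (j :: ·)

lemma mem_SL_ge (n : ℕ) : ∀ (m : ℕ) (t : ℕ → ℕ) (a : ℕ) (l : List ℕ),
    l ∈ SL n m t a → ∀ i ∈ l, a ≤ i := by
  intro m
  induction m with
  | zero =>
    intro t a l hl i hi
    simp [SL] at hl
    subst hl; simp at hi
  | succ m ih =>
    intro t a l hl i hi
    simp only [SL, Finset.mem_biUnion, Finset.mem_image, Finset.mem_Icc] at hl
    obtain ⟨j, ⟨haj, hjn⟩, l', hl', rfl⟩ := hl
    rcases List.mem_cons.1 hi with rfl | hi'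
    · exact haj
    · exact le_trans haj (le_trans (Nat.le_add_right _ _) (ih _ _ l' hl' i hi'))

lemma sorted_SL (n : ℕ) : ∀ (m : ℕ) (t : ℕ → ℕ) (a : ℕ) (l : List ℕ),
    l ∈ SL n m t a → l.Pairwise (· ≤ ·) := by
  intro m
  induction m with
  | zero =>
    intro t a l hl
    simp [SL] at hl; subst hl; simp
  | succ m ih =>
    intro t a l hl
    simp only [SL, Finset.mem_biUnion, Finset.mem_image, Finset.mem_Icc] at hl
    obtain ⟨j, ⟨haj, hjn⟩, l', hl', rfl⟩ := hl
    rw [List.pairwise_cons]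
    exact ⟨fun b hb => le_trans (Nat.le_add_right _ _) (mem_SL_ge n m _ _ l' hl' b hb),
      ih _ _ l' hl'⟩

lemma mem_SL_iff (n : ℕ) : ∀ (m : ℕ) (t : ℕ → ℕ) (a : ℕ) (l : List ℕ),
    l ∈ SL n m t a ↔
      l.length = m ∧ (∀ i ∈ l, i ≤ n) ∧
      (∀ k, k + 1 < m → l.getD k 0 + t (k + 1) ≤ l.getD (k + 1) 0) ∧
      (0 < m → a ≤ l.getD 0 0) := by
  intro m
  induction m with
  | zero =>
    intro t a l
    simp only [SL, Finset.mem_singleton]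
    constructor
    · rintro rfl; simp
    · rintro ⟨h, -⟩; exact List.length_eq_zero_iff.1 h
  | succ m ih =>
    intro t a l
    simp only [SL, Finset.mem_biUnion, Finset.mem_image, Finset.mem_Icc]
    constructor
    · rintro ⟨j, ⟨haj, hjn⟩, l', hl', rfl⟩
      rw [ih] at hl'
      obtain ⟨hlen, hle, hchain, hhead⟩ := hl'
      refine ⟨by simp [hlen], ?_, ?_, ?_⟩
      · intro i hi
        rcases List.mem_cons.1 hi with rfl | hi'
        · exact hjn
        · exact hle i hi'
      · intro k hk
        cases k with
        | zero =>
          simpa using hhead (by omega)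
        | succ k =>
          simpa using hchain k (by omega)
      · intro _; simpa using haj
    · rintro ⟨hlen, hle, hchain, hhead⟩
      cases l with
      | nil => simp at hlen
      | cons j l' =>
        refine ⟨j, ⟨by simpa using hhead (by omega), hle j (List.mem_cons_self)⟩,
          l', ?_, rfl⟩
        rw [ih]
        refine ⟨by simpa using hlen, fun i hi => hle i (List.mem_cons_of_mem _ hi),
          ?_, ?_⟩
        · intro k hk
          have := hchain (k + 1) (by omega)
          simpa using this
        · intro hm
          have := hchain 0 (by omega)
          simpa using this

lemma SL_disjoint {i j : ℕ} (hij : i ≠ j) (S T : Finset (List ℕ)) :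
    Disjoint (S.image (i :: ·)) (T.image (j :: ·)) := by
  rw [Finset.disjoint_left]
  rintro l hl1 hl2
  simp only [Finset.mem_image] at hl1 hl2
  obtain ⟨l1, -, rfl⟩ := hl1
  obtain ⟨l2, -, h⟩ := hl2
  exact hij (by injection h.symm)

lemma card_SL (n : ℕ) : ∀ (m : ℕ) (t : ℕ → ℕ) (a : ℕ),
    (SL n m t a).card
      = ((n + m) - (a + ∑ h ∈ Finset.range (m - 1), t (h + 1))).choose m := by
  intro m
  induction m with
  | zero => intro t a; simp [SL]
  | succ m ih =>
    intro t a
    rw [show SL n (m+1) t a = (Finset.Icc a n).biUnion fun j =>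
      (SL n m (fun h => t (h + 1)) (j + t 1)).image (j :: ·) from rfl]
    rw [Finset.card_biUnion (fun i _ j _ hij => SL_disjoint hij _ _)]
    have hcards : ∀ j, ((SL n m (fun h => t (h + 1)) (j + t 1)).image (j :: ·)).card
        = ((n + m) - (j + t 1 + ∑ h ∈ Finset.range (m - 1), t (h + 2))).choose m := by
      intro j
      rw [Finset.card_image_of_injective _ (List.cons_injective), ih]
    cases m with
    | zero =>
      simp only [hcards]
      simp [Nat.card_Icc, Nat.choose_one_right]
    | succ k =>
      simp only [Nat.add_sub_cancel] at hcards ⊢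
      set T' : ℕ := ∑ h ∈ Finset.range k, t (h + 2) with hT'
      have hterm : ∀ j, ((n + (k + 1)) - (j + t 1 + T')).choose (k + 1)
          = ((n + (k + 1)) - (t 1 + T') - j).choose (k + 1) := by
        intro j; congr 1; omega
      rw [Finset.sum_congr rfl (fun j _ => (hcards j).trans (hterm j))]
      rw [hockey _ _ (by omega) n a]
      have h0 : ((n + (k + 1)) - (t 1 + T') - n).choose (k + 1 + 1) = 0 :=
        Nat.choose_eq_zero_of_lt (by omega)
      rw [h0, Nat.sub_zero]
      have hsum : ∑ h ∈ Finset.range (k + 1), t (h + 1) = T' + t 1 := by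
        rw [Finset.sum_range_succ' (fun h => t (h + 1)) k]
      rw [hsum]
      by_cases hc : t 1 + T' ≤ n + (k + 1)
      · congr 1; omega
      · rw [Nat.choose_eq_zero_of_lt (by omega), Nat.choose_eq_zero_of_lt (by omega)]

lemma card_lex (n : ℕ) : ∀ (m : ℕ) (t : ℕ → ℕ) (a : ℕ) (s : List ℕ),
    s ∈ SL n m t a →
    ((SL n m t a).filter (fun l => List.Lex (· < ·) s l)).card
      = ∑ j ∈ Finset.range m,
          ((n + j) - (s.getD (m - 1 - j) 0
            + ∑ h ∈ Finset.range j, t (m - j + h))).choose (j + 1) := by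
  intro m
  induction m with
  | zero =>
    intro t a s hs
    simp only [SL, Finset.mem_singleton] at hs
    subst hs
    rw [Finset.range_zero, Finset.sum_empty, Finset.card_eq_zero,
      Finset.filter_eq_empty_iff]
    intro l hl
    simp only [SL, Finset.mem_singleton] at hl
    subst hl
    exact List.not_lex_nil
  | succ m ih =>
    intro t a s hs
    have hs' := hs
    simp only [SL, Finset.mem_biUnion, Finset.mem_image, Finset.mem_Icc] at hs'
    obtain ⟨j0, ⟨haj0, hj0n⟩, s', hs'mem, rfl⟩ := hs'
    rw [show SL n (m+1) t a = (Finset.Icc a n).biUnion fun j =>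
      (SL n m (fun h => t (h + 1)) (j + t 1)).image (j :: ·) from rfl]
    rw [Finset.filter_biUnion]
    rw [Finset.card_biUnion (fun i hi j hj hij =>
      Finset.disjoint_filter_filter (SL_disjoint hij _ _))]
    set F : ℕ → Finset (List ℕ) := fun j =>
      (SL n m (fun h => t (h + 1)) (j + t 1)).image (j :: ·) with hF
    have hg_lt : ∀ j < j0,
        ((F j).filter (fun l => List.Lex (· < ·) (j0 :: s') l)).card = 0 := by
      intro j hj
      simp only [Finset.card_eq_zero]
      rw [Finset.filter_eq_empty_iff]
      intro l hl
      simp only [hF, Finset.mem_image] at hl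
      obtain ⟨l', -, rfl⟩ := hl
      intro hlex
      cases hlex with
      | cons h => omega
      | rel h => omega
    have hg_gt : ∀ j, j0 < j →
        ((F j).filter (fun l => List.Lex (· < ·) (j0 :: s') l)).card = (F j).card := by
      intro j hj
      rw [Finset.filter_true_of_mem]
      intro l hl
      simp only [hF, Finset.mem_image] at hl
      obtain ⟨l', -, rfl⟩ := hl
      exact List.Lex.rel hj
    have hg_eq : ((F j0).filter (fun l => List.Lex (· < ·) (j0 :: s') l)).card
        = ((SL n m (fun h => t (h + 1)) (j0 + t 1)).filter
          (fun l => List.Lex (· < ·) s' l)).card := by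
      simp only [hF]
      rw [Finset.filter_image]
      rw [Finset.card_image_of_injective _ (List.cons_injective)]
      congr 1
      apply Finset.filter_congr
      intro l hl
      simp only [List.lex_cons_iff]
    have hsub : ∑ j ∈ Finset.Icc a n,
          ((F j).filter (fun l => List.Lex (· < ·) (j0 :: s') l)).card
        = ∑ j ∈ Finset.Icc j0 n,
          ((F j).filter (fun l => List.Lex (· < ·) (j0 :: s') l)).card := by
      rw [Finset.sum_subset (Finset.Icc_subset_Icc_left haj0)]
      intro x hx hx'
      simp only [Finset.mem_Icc] at hx hx'
      exact hg_lt x (by omega)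
    have hsplit : ∑ j ∈ Finset.Icc j0 n,
          ((F j).filter (fun l => List.Lex (· < ·) (j0 :: s') l)).card
        = ((F j0).filter (fun l => List.Lex (· < ·) (j0 :: s') l)).card
          + ∑ j ∈ Finset.Icc (j0 + 1) n,
              ((F j).filter (fun l => List.Lex (· < ·) (j0 :: s') l)).card := by
      rw [Finset.Icc_eq_cons_Ioc hj0n, Finset.sum_cons, Finset.Icc_add_one_left_eq_Ioc]
    have hFcard : ∀ j, (F j).card
        = ((n + m) - (j + t 1 + ∑ h ∈ Finset.range (m - 1), t (h + 2))).choose m := by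
      intro j
      simp only [hF]
      rw [Finset.card_image_of_injective _ (List.cons_injective), card_SL]
    rw [hsub, hsplit, hg_eq, ih _ _ s' hs'mem]
    rw [Finset.sum_congr rfl (fun j hj => (hg_gt j (by
      simp only [Finset.mem_Icc] at hj; omega)).trans (hFcard j))]
    rw [Finset.sum_range_succ]
    congr 1
    · apply Finset.sum_congr rfl
      intro j hj
      simp only [Finset.mem_range] at hj
      have h1 : m + 1 - 1 - j = (m - 1 - j) + 1 := by omega
      rw [h1, List.getD_cons_succ]
      congr 2
      congr 1
      apply Finset.sum_congr rfl
      intro h _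
      congr 1
      omega
    · -- top term
      cases m with
      | zero =>
        simp [Nat.card_Icc, Nat.choose_one_right]
      | succ k =>
        simp only [Nat.add_sub_cancel] at *
        set T' : ℕ := ∑ h ∈ Finset.range k, t (h + 2) with hT'
        have hterm : ∀ j, ((n + (k+1)) - (j + t 1 + T')).choose (k+1)
            = ((n + (k + 1)) - (t 1 + T') - j).choose (k + 1) := by
          intro j; congr 1; omega
        rw [Finset.sum_congr rfl (fun j _ => hterm j)]
        rw [hockey _ _ (by omega) n (j0 + 1)]
        have h0 : ((n + (k + 1)) - (t 1 + T') - n).choose (k + 1 + 1) = 0 :=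
          Nat.choose_eq_zero_of_lt (by omega)
        rw [h0, Nat.sub_zero]
        have hgd : (j0 :: s').getD (k + 1 - (k + 1)) 0 = j0 := by
          rw [Nat.sub_self]; rfl
        rw [hgd]
        have hsum : ∑ h ∈ Finset.range (k + 1), t (k + 1 + 1 - (k + 1) + h)
            = T' + t 1 := by
          rw [Finset.sum_range_succ' (fun h => t (k + 1 + 1 - (k + 1) + h)) k]
          simp only [hT']
          congr 1
          · apply Finset.sum_congr rfl
            intro h _
            congr 1
            omega
          · congr 1
            omega
        rw [hsum]
        by_cases hc : t 1 + T' ≤ n + (k + 1)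
        · congr 1; omega
        · rw [Nat.choose_eq_zero_of_lt (by omega), Nat.choose_eq_zero_of_lt (by omega)]

end Stmt10Aux

/-- for `u = x_{i_1}⋯x_{i_ℓ} ∈ M_{n,ℓ,t}`,
`|M_{n,ℓ,t} \ L_t^i(u)| = Σ_{j=1}^{ℓ} C(a_j, j)` with
`a_j = n - i_{ℓ-(j-1)} + j - 1 - Σ_{h=ℓ-(j-1)}^{ℓ-1} t_h`, and this is the
Macaulay expansion of that cardinality with respect to `ℓ`. -/
theorem stmt10 (n d ℓ : ℕ) (t : ℕ → ℕ) (hd : 2 ≤ d) (hℓ1 : 1 ≤ ℓ) (hℓd : ℓ ≤ d)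
    (idx : ℕ → ℕ) (u : Multiset ℕ)
    (hu : u = (Finset.Icc 1 ℓ).val.map idx)
    (hrange : ∀ k ∈ Finset.Icc 1 ℓ, 1 ≤ idx k ∧ idx k ≤ n)
    (hmono : ∀ k, 1 ≤ k → k < ℓ → idx k + t k ≤ idx (k + 1))
    (huM : u ∈ Mset n d ℓ t)
    (A : ℕ → ℕ)
    (hA : ∀ j ∈ Finset.Icc 1 ℓ,
      A j = n - idx (ℓ - (j - 1)) + (j - 1) - ∑ h ∈ Finset.Icc (ℓ - (j - 1)) (ℓ - 1), t h) :
    (Mset n d ℓ t \ {v ∈ Mset n d ℓ t | lexGE v u}).ncard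
        = ∑ j ∈ Finset.Icc 1 ℓ, (A j).choose j ∧
      ∀ j, 1 ≤ j → j < ℓ → j ≤ A j → A j < A (j + 1) ∧ j + 1 ≤ A (j + 1) := by
  classical
  constructor
  · -- Part 1 : the cardinality formula
    set L : List ℕ := (List.range' 1 ℓ).map idx with hL
    have hLlen : L.length = ℓ := by simp [hL]
    have hgetD : ∀ k, k < ℓ → L.getD k 0 = idx (1 + k) := by
      intro k hk
      rw [List.getD_eq_getElem _ _ (by simpa [hL] using hk)]
      simp [hL, List.getElem_range'_1]
    have hcoe : (L : Multiset ℕ) = u := by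
      have hIcc : (Finset.Icc 1 ℓ).val = ((List.range' 1 ℓ : List ℕ) : Multiset ℕ) := by
        rw [Multiset.Nodup.ext (Finset.Icc 1 ℓ).nodup
          (by rw [Multiset.coe_nodup]; exact List.nodup_range' (s := 1) (n := ℓ))]
        intro a
        simp only [← Finset.mem_def, Finset.mem_Icc, Multiset.mem_coe, List.mem_range'_1]
        omega
      rw [hu, hIcc, hL, Multiset.map_coe]
    have hmono2 : ∀ q p, 1 ≤ p → p ≤ q → q ≤ ℓ → idx p ≤ idx q := by
      intro q
      induction q with
      | zero => intro p hp hpq _; exact absurd hpq (by omega)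
      | succ q ihq =>
        intro p hp hpq hq
        rcases Nat.lt_or_ge p (q + 1) with h | h
        · exact le_trans (ihq p hp (by omega) (by omega))
            (le_trans (Nat.le_add_right _ _) (hmono q (by omega) (by omega)))
        · have hpe : p = q + 1 := by omega
          subst hpe; exact le_rfl
    have hLsorted : L.Pairwise (· ≤ ·) := by
      rw [hL, List.pairwise_map]
      refine List.Pairwise.imp_of_mem ?_ (List.pairwise_lt_range' (s := 1) (n := ℓ))
      intro a b ha hb hab
      rw [List.mem_range'_1] at ha hb
      exact hmono2 b a ha.1 (le_of_lt hab) (by omega)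
    have hsort : Multiset.sort u (· ≤ ·) = L := by
      refine (fun hp s1 s2 => List.Perm.eq_of_pairwise' s1 s2 hp) ?_ (Multiset.pairwise_sort u _) hLsorted
      exact Multiset.coe_eq_coe.1 (by rw [Multiset.sort_eq, hcoe])
    have hLSL : L ∈ Stmt10Aux.SL n ℓ t 1 := by
      rw [Stmt10Aux.mem_SL_iff]
      refine ⟨hLlen, ?_, ?_, ?_⟩
      · intro i hi
        rw [hL, List.mem_map] at hi
        obtain ⟨k, hk, rfl⟩ := hi
        rw [List.mem_range'_1] at hk
        exact (hrange k (Finset.mem_Icc.2 ⟨hk.1, by omega⟩)).2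
      · intro k hk
        rw [hgetD k (by omega), hgetD (k + 1) (by omega),
          show 1 + k = k + 1 from by omega, show 1 + (k + 1) = k + 1 + 1 from by omega]
        exact hmono (k + 1) (by omega) (by omega)
      · intro _
        rw [hgetD 0 (by omega), show 1 + 0 = 1 from rfl]
        exact (hrange 1 (Finset.mem_Icc.2 ⟨le_rfl, hℓ1⟩)).1
    have hsetEq : Mset n d ℓ t \ {v ∈ Mset n d ℓ t | lexGE v u}
        = ↑(((Stmt10Aux.SL n ℓ t 1).filter (fun l => List.Lex (· < ·) L l)).image
            (Multiset.ofList : List ℕ → Multiset ℕ)) := by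
      ext v
      simp only [Set.mem_diff, Set.mem_setOf_eq, Finset.coe_image, Set.mem_image,
        Finset.mem_coe, Finset.mem_filter]
      constructor
      · rintro ⟨hvM, hnot⟩
        have hnlex : ¬ lexGE v u := fun h => hnot ⟨hvM, h⟩
        obtain ⟨⟨hcard, hent, hchain⟩, hlen⟩ := hvM
        refine ⟨Multiset.sort v (· ≤ ·), ⟨?_, ?_⟩, Multiset.sort_eq _ _⟩
        · rw [Stmt10Aux.mem_SL_iff]
          refine ⟨by rw [Multiset.length_sort, hlen], ?_, ?_, ?_⟩
          · intro i hi
            exact (hent i ((Multiset.mem_sort _).1 hi)).2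
          · intro k hk
            exact hchain k (by rw [hlen]; exact hk)
          · intro h0
            have hlen0 : 0 < (Multiset.sort v (· ≤ ·)).length := by
              rw [Multiset.length_sort, hlen]; omega
            rw [List.getD_eq_getElem _ _ hlen0]
            exact (hent _ ((Multiset.mem_sort _).1 (List.getElem_mem hlen0))).1
        · rcases trichotomous_of
              (List.Lex (· < ·)) (Multiset.sort v (· ≤ ·))
            (Multiset.sort u (· ≤ ·)) with hlt | heq | hgt
          · exact absurd (Or.inr hlt) hnlex
          · exact absurd (Or.inl (by
              rw [← Multiset.sort_eq v (· ≤ ·), ← Multiset.sort_eq u (· ≤ ·), heq])) hnlex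
          · rwa [hsort] at hgt
      · rintro ⟨l, ⟨hlSL, hlex⟩, rfl⟩
        have hlsorted := Stmt10Aux.sorted_SL n ℓ t 1 l hlSL
        have hge := Stmt10Aux.mem_SL_ge n ℓ t 1 l hlSL
        have hsortl : Multiset.sort ((l : List ℕ) : Multiset ℕ) (· ≤ ·) = l :=
          (fun hp s1 s2 => List.Perm.eq_of_pairwise' s1 s2 hp) (Multiset.coe_eq_coe.1 (Multiset.sort_eq _ _))
            (Multiset.pairwise_sort _ _) hlsorted
        rw [Stmt10Aux.mem_SL_iff] at hlSL
        obtain ⟨hlen, hle, hchain, hhead⟩ := hlSL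
        have hvM : ((l : List ℕ) : Multiset ℕ) ∈ Mset n d ℓ t := by
          refine ⟨⟨?_, ?_, ?_⟩, ?_⟩
          · rw [Multiset.coe_card, hlen]; exact hℓd
          · intro i hi
            rw [Multiset.mem_coe] at hi
            exact ⟨hge i hi, hle i hi⟩
          · intro k hk
            rw [Multiset.coe_card, hlen] at hk
            rw [hsortl]
            exact hchain k hk
          · rw [Multiset.coe_card, hlen]
        refine ⟨hvM, ?_⟩
        rintro ⟨-, hge'⟩
        rcases hge' with heq | hlt
        · rw [← hcoe, Multiset.coe_eq_coe] at heq
          have hlL : l = L := (fun hp s1 s2 => List.Perm.eq_of_pairwise' s1 s2 hp) heq hlsorted hLsorted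
          rw [hlL] at hlex
          exact asymm hlex hlex
        · rw [hsortl, hsort] at hlt
          exact asymm hlex hlt
    rw [hsetEq, Set.ncard_coe_finset]
    rw [Finset.card_image_of_injOn (fun l1 h1 l2 h2 he =>
      (fun hp s1 s2 => List.Perm.eq_of_pairwise' s1 s2 hp) (Multiset.coe_eq_coe.1 he)
        (Stmt10Aux.sorted_SL n ℓ t 1 l1 (Finset.mem_filter.1 h1).1)
        (Stmt10Aux.sorted_SL n ℓ t 1 l2 (Finset.mem_filter.1 h2).1))]
    rw [Stmt10Aux.card_lex n ℓ t 1 L hLSL]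
    rw [show Finset.Icc 1 ℓ = Finset.Ico 1 (ℓ + 1) from (Finset.Ico_add_one_right_eq_Icc 1 ℓ).symm,
      Finset.sum_Ico_eq_sum_range]
    simp only [Nat.add_sub_cancel]
    apply Finset.sum_congr rfl
    intro j hj
    rw [Finset.mem_range] at hj
    have hAj := hA (1 + j) (Finset.mem_Icc.2 ⟨by omega, by omega⟩)
    simp only [show (1 : ℕ) + j - 1 = j from by omega] at hAj
    have hsum2 : ∑ h ∈ Finset.Icc (ℓ - j) (ℓ - 1), t h
        = ∑ h ∈ Finset.range j, t (ℓ - j + h) := by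
      rw [← Finset.Ico_add_one_right_eq_Icc, show ℓ - 1 + 1 = ℓ from by omega,
        Finset.sum_Ico_eq_sum_range, show ℓ - (ℓ - j) = j from by omega]
    have hxn : idx (ℓ - j) ≤ n := (hrange (ℓ - j) (Finset.mem_Icc.2 ⟨by omega, by omega⟩)).2
    rw [hgetD (ℓ - 1 - j) (by omega), show 1 + (ℓ - 1 - j) = ℓ - j from by omega]
    rw [hAj, hsum2, Nat.add_comm 1 j]
    congr 1
    omega
  · -- Part 2 : Macaulay expansion property
    intro j hj1 hjl hjA
    have hAj := hA j (Finset.mem_Icc.2 ⟨hj1, by omega⟩)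
    have hAj1 := hA (j + 1) (Finset.mem_Icc.2 ⟨by omega, by omega⟩)
    rw [show ℓ - (j - 1) = (ℓ - j) + 1 from by omega] at hAj
    rw [show ℓ - (j + 1 - 1) = ℓ - j from by omega] at hAj1
    have hmo := hmono (ℓ - j) (by omega) (by omega)
    have hx := (hrange ((ℓ - j) + 1) (Finset.mem_Icc.2 ⟨by omega, by omega⟩)).2
    have hS : ∑ h ∈ Finset.Icc (ℓ - j) (ℓ - 1), t h
        = t (ℓ - j) + ∑ h ∈ Finset.Icc ((ℓ - j) + 1) (ℓ - 1), t h := by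
      rw [Finset.Icc_eq_cons_Ioc (show ℓ - j ≤ ℓ - 1 from by omega), Finset.sum_cons,
        ← Finset.Icc_add_one_left_eq_Ioc]
    rw [hS] at hAj1
    omega
end

section
/- Let u = x_{i_1}···x_{i_ℓ} = min_lex L for a t-spread lex set L = L_t^i(u) ⊆ M_{n,ℓ,t} with ℓ < d. Then the lex-minimal element of Shad_t(L) is ũ = (∏_{h=1}^{ℓ-r} x_{i_h})·(∏_{h=1}^{r+1} x_{n - Σ_{p=ℓ-(r-h)}^{ℓ} t_p}), where r = min{s ∈ [0,ℓ] : n - i_ℓ + Σ_{h=1}^{s}(i_{ℓ-(h-1)} - i_{ℓ-h} - t_{ℓ-h}) ≥ t_ℓ} (with conventions i_0 = t_0 = 0). -/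
open Multiset Finset

lemma aux_sort_eq (l : List ℕ) (hs : l.Pairwise (· ≤ ·)) :
    Multiset.sort (l : Multiset ℕ) (· ≤ ·) = l :=
  List.Perm.eq_of_pairwise' (Multiset.pairwise_sort _ _) hs
    (Multiset.coe_eq_coe.mp (by rw [Multiset.sort_eq]))

lemma aux_lex_append (p : List ℕ) {l₁ l₂ : List ℕ} (h : List.Lex (· < ·) l₁ l₂) :
    List.Lex (· < ·) (p ++ l₁) (p ++ l₂) := by
  induction p with
  | nil => exact h
  | cons a p ih => exact List.Lex.cons ih

lemma aux_mono_of_adj (f : ℕ → ℕ) (N : ℕ) (h : ∀ k, k + 1 ≤ N → f k ≤ f (k + 1)) :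
    ∀ j k, j ≤ k → k ≤ N → f j ≤ f k := by
  intro j k hjk hk
  induction k with
  | zero => have : j = 0 := by omega
            subst this; exact le_refl _
  | succ k ih =>
    rcases Nat.eq_or_lt_of_le hjk with rfl | hlt
    · exact le_refl _
    · exact le_trans (ih (by omega) (by omega)) (h k hk)

lemma aux_lex_getElem : ∀ {l₁ l₂ : List ℕ}, (l₁ = l₂ ∨ List.Lex (· < ·) l₁ l₂) →
    ∀ j (h₁ : j < l₁.length) (h₂ : j < l₂.length),
      (∀ k, k < j → ∀ (hk₁ : k < l₁.length) (hk₂ : k < l₂.length), l₂[k] ≤ l₁[k]) →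
      l₁[j] ≤ l₂[j] := by
  intro l₁ l₂ h
  rcases h with rfl | h
  · intro j h₁ h₂ _; exact le_refl _
  · induction h with
    | nil => intro j h₁; simp at h₁
    | @rel a l₁ b l₂ hab =>
      intro j h₁ h₂ hk
      match j with
      | 0 => exact le_of_lt hab
      | j + 1 =>
        have := hk 0 (by omega) (by simp) (by simp)
        simp at this; omega
    | @cons a l₁ l₂ h ih =>
      intro j h₁ h₂ hk
      match j with
      | 0 => exact le_refl _
      | j + 1 =>
        simp only [List.getElem_cons_succ]
        exact ih j (by simpa using h₁) (by simpa using h₂)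
          (fun k hkj hk₁ hk₂ => by
            have := hk (k+1) (by omega) (by simpa using hk₁) (by simpa using hk₂)
            simpa using this)

lemma aux_lex_exists : ∀ {l₁ l₂ : List ℕ}, List.Lex (· < ·) l₁ l₂ → l₁.length = l₂.length →
    ∃ j, ∃ (h₁ : j < l₁.length) (h₂ : j < l₂.length), l₁[j] < l₂[j] ∧
      ∀ k, k < j → ∀ (hk₁ : k < l₁.length) (hk₂ : k < l₂.length), l₁[k] = l₂[k] := by
  intro l₁ l₂ h
  induction h with
  | nil => intro hlen; simp at hlen
  | @rel a l₁ b l₂ hab =>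
    intro hlen
    exact ⟨0, by simp, by simp, by simpa using hab, fun k hk => by omega⟩
  | @cons a l₁ l₂ h ih =>
    intro hlen
    obtain ⟨j, h₁, h₂, hlt, heq⟩ := ih (by simpa using hlen)
    refine ⟨j + 1, by simpa using h₁, by simpa using h₂, by simpa using hlt, ?_⟩
    intro k hk hk₁ hk₂
    match k with
    | 0 => simp
    | k + 1 =>
      simpa using heq k (by omega) (by simpa using hk₁) (by simpa using hk₂)

lemma aux_sorted_mono (l : List ℕ) (h : l.Pairwise (· ≤ ·)) (j k : ℕ) (hjk : j ≤ k)
    (hk : k < l.length) : l[j]'(by omega) ≤ l[k] := by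
  rcases Nat.eq_or_lt_of_le hjk with rfl | hlt
  · exact le_refl _
  · exact List.pairwise_iff_getElem.mp h j k (by omega) hk hlt

lemma aux_erase_ge (l : List ℕ) (h : l.Pairwise (· ≤ ·)) (i : ℕ) :
    ∀ k (hk : k < (l.erase i).length), l[k]'(by have := List.length_erase_le (a := i) (l := l); omega) ≤ (l.erase i)[k] := by
  induction l with
  | nil => intro k hk; simp at hk
  | cons a l ih =>
    by_cases hia : i = a
    · subst hia
      intro k hk
      simp only [List.erase_cons_head] at hk ⊢
      calc (i :: l)[k]'(by simp; omega) ≤ (i :: l)[k+1]'(by simp; omega) :=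
            aux_sorted_mono _ h k (k+1) (by omega) (by simp; omega)
        _ = l[k] := by simp
    · intro k hk
      simp only [List.erase_cons_tail (by simpa using Ne.symm hia : ¬(a == i) = true)] at hk ⊢
      match k with
      | 0 => simp
      | k + 1 =>
        simp only [List.getElem_cons_succ]
        exact ih h.of_cons k (by simpa using hk)

lemma aux_chain (V : List ℕ) (t : ℕ → ℕ)
    (hsp : ∀ k, k + 1 < V.length → V.getD k 0 + t (k + 1) ≤ V.getD (k + 1) 0) :
    ∀ j k, j ≤ k → k < V.length →
      V.getD j 0 + ∑ p ∈ Finset.Icc (j + 1) k, t p ≤ V.getD k 0 := by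
  intro j k hjk hk
  induction k, hjk using Nat.le_induction with
  | base => simp
  | succ k hjk ih =>
    have h1 := hsp k (by omega)
    have h2 := ih (by omega)
    rw [Finset.sum_Icc_succ_top (by omega)]
    omega

def auxL (f : ℕ → ℕ) (N : ℕ) : List ℕ := (List.range' 1 N).map f

def auxB (n ℓ r : ℕ) (t : ℕ → ℕ) (h : ℕ) : ℕ := n - ∑ p ∈ Finset.Icc (ℓ - r + h) ℓ, t p

def auxC (idx : ℕ → ℕ) (n ℓ r : ℕ) (t : ℕ → ℕ) (k : ℕ) : ℕ :=
  if k < ℓ - r then idx (k + 1) else auxB n ℓ r t (k - (ℓ - r) + 1)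

lemma auxL_length (f : ℕ → ℕ) (N : ℕ) : (auxL f N).length = N := by simp [auxL]

lemma aux_map_range'_getElem (f : ℕ → ℕ) (s N k j : ℕ)
    (hk : k < ((List.range' s N).map f).length) (hj : j = s + k) :
    ((List.range' s N).map f)[k] = f j := by
  subst hj
  rw [List.getElem_map, List.getElem_range']
  congr 1
  omega

lemma auxL_getElem (f : ℕ → ℕ) (N k j : ℕ) (hk : k < (auxL f N).length) (hj : j = k + 1) :
    (auxL f N)[k] = f j := aux_map_range'_getElem f 1 N k j hk (by omega)

lemma auxL_coe (f : ℕ → ℕ) (N : ℕ) :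
    (Finset.Icc 1 N).val.map f = ((auxL f N : List ℕ) : Multiset ℕ) := by
  rw [Nat.Icc_eq_range']
  simp [auxL, Multiset.map_coe]

lemma auxL_mem (f : ℕ → ℕ) (N : ℕ) (x : ℕ) (hx : x ∈ auxL f N) :
    ∃ k, 1 ≤ k ∧ k ≤ N ∧ f k = x := by
  simp only [auxL, List.mem_map, List.mem_range'_1] at hx
  obtain ⟨k, hk, rfl⟩ := hx
  exact ⟨k, by omega, by omega, rfl⟩

lemma auxL_succ (f : ℕ → ℕ) (N : ℕ) : auxL f (N + 1) = auxL f N ++ [f (1 + N)] := by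
  simp only [auxL]
  rw [← List.range'_append (s := 1) (m := N) (n := 1) (step := 1)]
  simp [List.range']

lemma aux_lex_head (l₁ l₂ : List ℕ) (h₁ : 0 < l₁.length) (h₂ : 0 < l₂.length)
    (h : l₁[0] < l₂[0]) : List.Lex (· < ·) l₁ l₂ := by
  match l₁, l₂ with
  | [], _ => simp at h₁
  | _, [] => simp at h₂
  | a :: l₁, b :: l₂ => exact List.Lex.rel (by simpa using h)

lemma auxC_getElem (idx : ℕ → ℕ) (n ℓ r : ℕ) (t : ℕ → ℕ) (R k : ℕ)
    (hk : k < (auxL idx (ℓ - r) ++ auxL (auxB n ℓ r t) R).length) :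
    (auxL idx (ℓ - r) ++ auxL (auxB n ℓ r t) R)[k] = auxC idx n ℓ r t k := by
  have hlen : (auxL idx (ℓ - r) ++ auxL (auxB n ℓ r t) R).length = (ℓ - r) + R := by
    simp [auxL]
  by_cases hkm : k < ℓ - r
  · rw [List.getElem_append_left (by rw [auxL_length]; exact hkm)]
    simp only [auxC, if_pos hkm]
    exact auxL_getElem _ _ _ _ _ rfl
  · rw [List.getElem_append_right (by rw [auxL_length]; omega)]
    simp only [auxC, if_neg hkm]
    exact auxL_getElem _ _ _ _ _ (by rw [auxL_length])

/-- the lex-minimal element of `Shad_t(L)` for the t-spread lex set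
`L = L_t^i(u)`, `u = x_{i_1}⋯x_{i_ℓ}`, is
`ũ = (∏_{h=1}^{ℓ-r} x_{i_h})·(∏_{h=1}^{r+1} x_{n - Σ_{p=ℓ-(r-h)}^{ℓ} t_p})` with
`r = min{s ∈ [0,ℓ] : n - i_ℓ + Σ_{h=1}^{s}(i_{ℓ-(h-1)} - i_{ℓ-h} - t_{ℓ-h}) ≥ t_ℓ}`
(conventions `i_0 = t_0 = 0`). -/
theorem stmt11 (n d ℓ : ℕ) (t : ℕ → ℕ) (hd : 2 ≤ d) (hℓ1 : 1 ≤ ℓ) (hℓ : ℓ < d)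
    (ht0 : t 0 = 0)
    (idx : ℕ → ℕ) (hidx0 : idx 0 = 0) (u : Multiset ℕ)
    (hu : u = (Finset.Icc 1 ℓ).val.map idx)
    (hmono : ∀ k, 1 ≤ k → k < ℓ → idx k + t k ≤ idx (k + 1))
    (huM : u ∈ Mset n d ℓ t)
    (hn : 1 + ∑ j ∈ Finset.Icc 1 ℓ, t j ≤ n)
    (r : ℕ) (hrℓ : r ≤ ℓ)
    (hrC : t ℓ ≤ n - idx ℓ +
      ∑ h ∈ Finset.Icc 1 r, (idx (ℓ - (h - 1)) - idx (ℓ - h) - t (ℓ - h)))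
    (hrmin : ∀ s < r, ¬ (t ℓ ≤ n - idx ℓ +
      ∑ h ∈ Finset.Icc 1 s, (idx (ℓ - (h - 1)) - idx (ℓ - h) - t (ℓ - h))))
    (ut : Multiset ℕ)
    (hut : ut = ((Finset.Icc 1 (ℓ - r)).val.map idx) +
      ((Finset.Icc 1 (r + 1)).val.map
        (fun h => n - ∑ p ∈ Finset.Icc (ℓ - r + h) ℓ, t p))) :
    ut ∈ Shad n d t {v ∈ Mset n d ℓ t | lexGE v u} ∧
      ∀ v ∈ Shad n d t {v ∈ Mset n d ℓ t | lexGE v u}, lexGE v ut := by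
  classical
  obtain ⟨⟨hucard_le, hubd, husp⟩, hucard⟩ := huM
  -- basic index facts
  have hbd' : ∀ k, 1 ≤ k → k ≤ ℓ → 1 ≤ idx k ∧ idx k ≤ n := by
    intro k h1 h2
    apply hubd
    rw [hu]
    exact Multiset.mem_map_of_mem idx (by rw [Finset.mem_val, Finset.mem_Icc]; omega)
  have hmono' : ∀ k, k < ℓ → idx k + t k ≤ idx (k + 1) := by
    intro k hk
    match k with
    | 0 => simpa [hidx0, ht0] using (hbd' 1 le_rfl hℓ1).1
    | k + 1 => exact hmono (k + 1) (by omega) hk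
  have idxmono : ∀ j k, j ≤ k → k ≤ ℓ → idx j ≤ idx k :=
    aux_mono_of_adj idx ℓ (fun k hk => le_trans (Nat.le_add_right _ _) (hmono' k hk))
  -- sum facts
  set S : ℕ → ℕ := fun a => ∑ p ∈ Finset.Icc a ℓ, t p with hSdef
  have hSrec : ∀ a, a ≤ ℓ → S a = t a + S (a + 1) := by
    intro a ha
    show ∑ p ∈ Finset.Icc a ℓ, t p = t a + ∑ p ∈ Finset.Icc (a + 1) ℓ, t p
    rw [Finset.Icc_eq_cons_Ioc ha, Finset.sum_cons, ← Finset.Icc_add_one_left_eq_Ioc]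
  have hS1 : ∀ a, 1 ≤ a → S a + 1 ≤ n := by
    intro a ha
    have h1 : S a ≤ S 1 := Finset.sum_le_sum_of_subset (Finset.Icc_subset_Icc_left ha)
    have h2 : S 1 = ∑ j ∈ Finset.Icc 1 ℓ, t j := rfl
    omega
  have hStop : S (ℓ + 1) = 0 := by
    show ∑ p ∈ Finset.Icc (ℓ + 1) ℓ, t p = 0
    rw [Finset.Icc_eq_empty (by omega), Finset.sum_empty]
  have hSl : S ℓ = t ℓ := by
    show ∑ p ∈ Finset.Icc ℓ ℓ, t p = t ℓ
    rw [Finset.Icc_self, Finset.sum_singleton]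
  have hidxn : idx ℓ ≤ n := (hbd' ℓ hℓ1 le_rfl).2
  -- telescoping
  have htel : ∀ s, s ≤ ℓ →
      (∑ h ∈ Finset.Icc 1 s, (idx (ℓ - (h - 1)) - idx (ℓ - h) - t (ℓ - h)))
        + idx (ℓ - s) + S (ℓ - s) = idx ℓ + S ℓ := by
    intro s hs
    induction s with
    | zero => rw [Finset.Icc_eq_empty (by omega)]; simp
    | succ s ih =>
      have ihs := ih (by omega)
      rw [Finset.sum_Icc_succ_top (by omega : 1 ≤ s + 1)]
      have e1 : ℓ - (s + 1) + 1 = ℓ - s := by omega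
      have h2 := hSrec (ℓ - (s + 1)) (by omega)
      have h3 := hmono' (ℓ - (s + 1)) (by omega)
      rw [e1] at h2 h3
      simp only [Nat.add_sub_cancel]
      omega
  have hCnd : ∀ s, s ≤ ℓ → ((t ℓ ≤ n - idx ℓ +
      ∑ h ∈ Finset.Icc 1 s, (idx (ℓ - (h - 1)) - idx (ℓ - h) - t (ℓ - h))) ↔
      idx (ℓ - s) + S (ℓ - s) ≤ n) := by
    intro s hs
    have h1 := htel s hs
    omega
  have hA : idx (ℓ - r) + S (ℓ - r) ≤ n := (hCnd r hrℓ).mp hrC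
  have hB : 1 ≤ r → n < idx (ℓ - r + 1) + S (ℓ - r + 1) := by
    intro hr1
    have h1 := hrmin (r - 1) (by omega)
    have h2 := (not_congr (hCnd (r - 1) (by omega))).mp h1
    have e : ℓ - (r - 1) = ℓ - r + 1 := by omega
    rw [e] at h2
    omega
  -- list facts
  have hu2 : u = ((auxL idx ℓ : List ℕ) : Multiset ℕ) := by rw [hu, auxL_coe]
  have hut2 : ut = (Finset.Icc 1 (ℓ - r)).val.map idx +
      (Finset.Icc 1 (r + 1)).val.map (auxB n ℓ r t) := hut
  have hut2' : ut = ((auxL idx (ℓ - r) ++ auxL (auxB n ℓ r t) (r + 1) : List ℕ) : Multiset ℕ) := by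
    rw [hut2, auxL_coe, auxL_coe, ← Multiset.coe_add]
  have hCL : (auxL idx (ℓ - r) ++ auxL (auxB n ℓ r t) (r + 1)).length = ℓ + 1 := by
    simp [auxL]; omega
  have hWL : (auxL idx (ℓ - r) ++ auxL (auxB n ℓ r t) r).length = ℓ := by
    simp [auxL]; omega
  -- adjacency for the candidate
  have hcadj : ∀ k, k + 1 ≤ ℓ → auxC idx n ℓ r t k + t (k + 1) ≤ auxC idx n ℓ r t (k + 1) := by
    intro k hk
    by_cases h1 : k + 1 < ℓ - r
    · simp only [auxC, if_pos (show k < ℓ - r by omega), if_pos h1]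
      exact hmono' (k+1) (by omega)
    · by_cases h2 : k < ℓ - r
      · simp only [auxC, if_pos h2, if_neg h1]
        have e2 : k + 1 - (ℓ - r) + 1 = 1 := by omega
        have e3 : k + 1 = ℓ - r := by omega
        rw [e2, e3]
        have hb1 : auxB n ℓ r t 1 = n - S (ℓ - r + 1) := rfl
        rw [hb1]
        have h3 := hSrec (ℓ - r) (by omega)
        have h4 := hS1 (ℓ - r + 1) (by omega)
        omega
      · simp only [auxC, if_neg h2, if_neg h1]
        have hb1 : auxB n ℓ r t (k - (ℓ - r) + 1) = n - S (ℓ - r + (k - (ℓ - r) + 1)) := rfl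
        have hb2 : auxB n ℓ r t (k + 1 - (ℓ - r) + 1) = n - S (ℓ - r + (k + 1 - (ℓ - r) + 1)) := rfl
        rw [hb1, hb2, show ℓ - r + (k - (ℓ - r) + 1) = k + 1 from by omega,
          show ℓ - r + (k + 1 - (ℓ - r) + 1) = k + 1 + 1 from by omega]
        have h3 := hSrec (k + 1) (by omega)
        have h4 := hS1 (k + 1) (by omega)
        omega
  have hcmono := aux_mono_of_adj (auxC idx n ℓ r t) ℓ
    (fun k hk => le_trans (Nat.le_add_right _ _) (hcadj k hk))
  have hCsorted : (auxL idx (ℓ - r) ++ auxL (auxB n ℓ r t) (r + 1)).Pairwise (· ≤ ·) := by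
    apply List.pairwise_iff_getElem.mpr
    intro a b ha hb hab
    rw [auxC_getElem, auxC_getElem]
    exact hcmono a b (le_of_lt hab) (by rw [hCL] at hb; omega)
  have hWsorted : (auxL idx (ℓ - r) ++ auxL (auxB n ℓ r t) r).Pairwise (· ≤ ·) := by
    apply List.pairwise_iff_getElem.mpr
    intro a b ha hb hab
    rw [auxC_getElem, auxC_getElem]
    exact hcmono a b (le_of_lt hab) (by rw [hWL] at hb; omega)
  have hUsorted : (auxL idx ℓ).Pairwise (· ≤ ·) := by
    apply List.pairwise_iff_getElem.mpr
    intro a b ha hb hab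
    rw [auxL_getElem idx ℓ a (a + 1) ha rfl, auxL_getElem idx ℓ b (b + 1) hb rfl]
    exact idxmono (a + 1) (b + 1) (by omega) (by rw [auxL_length] at hb; omega)
  have hsortu : Multiset.sort u (· ≤ ·) = auxL idx ℓ := by
    rw [hu2]; exact aux_sort_eq _ hUsorted
  have hsortut : Multiset.sort ut (· ≤ ·) = auxL idx (ℓ - r) ++ auxL (auxB n ℓ r t) (r + 1) := by
    rw [hut2']; exact aux_sort_eq _ hCsorted
  have hsortW : Multiset.sort
        ((auxL idx (ℓ - r) ++ auxL (auxB n ℓ r t) r : List ℕ) : Multiset ℕ) (· ≤ ·)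
      = auxL idx (ℓ - r) ++ auxL (auxB n ℓ r t) r := aux_sort_eq _ hWsorted
  -- elements are in range
  have hbdC : ∀ x ∈ (auxL idx (ℓ - r) ++ auxL (auxB n ℓ r t) (r + 1)), 1 ≤ x ∧ x ≤ n := by
    intro x hx
    rw [List.mem_append] at hx
    rcases hx with hx | hx
    · obtain ⟨k, hk1, hk2, rfl⟩ := auxL_mem _ _ _ hx
      exact hbd' k hk1 (by omega)
    · obtain ⟨k, hk1, hk2, rfl⟩ := auxL_mem _ _ _ hx
      have hb : auxB n ℓ r t k = n - S (ℓ - r + k) := rfl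
      have h4 := hS1 (ℓ - r + k) (by omega)
      rw [hb]
      exact ⟨by omega, by omega⟩
  -- TSpread of the candidate
  have hTC : TSpread n d t
      ((auxL idx (ℓ - r) ++ auxL (auxB n ℓ r t) (r + 1) : List ℕ) : Multiset ℕ) := by
    refine ⟨?_, ?_, ?_⟩
    · rw [Multiset.coe_card, hCL]; omega
    · intro x hx
      exact hbdC x (Multiset.mem_coe.mp hx)
    · intro k hk
      rw [Multiset.coe_card, hCL] at hk
      rw [aux_sort_eq _ hCsorted,
        List.getD_eq_getElem _ _ (by rw [hCL]; omega),
        List.getD_eq_getElem _ _ (by rw [hCL]; omega),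
        auxC_getElem, auxC_getElem]
      exact hcadj k (by omega)
  have hTW : TSpread n d t
      ((auxL idx (ℓ - r) ++ auxL (auxB n ℓ r t) r : List ℕ) : Multiset ℕ) := by
    refine ⟨?_, ?_, ?_⟩
    · rw [Multiset.coe_card, hWL]; omega
    · intro x hx
      rw [Multiset.mem_coe, List.mem_append] at hx
      rcases hx with hx | hx
      · obtain ⟨k, hk1, hk2, rfl⟩ := auxL_mem _ _ _ hx
        exact hbd' k hk1 (by omega)
      · obtain ⟨k, hk1, hk2, rfl⟩ := auxL_mem _ _ _ hx
        have hb : auxB n ℓ r t k = n - S (ℓ - r + k) := rfl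
        have h4 := hS1 (ℓ - r + k) (by omega)
        rw [hb]
        exact ⟨by omega, by omega⟩
    · intro k hk
      rw [Multiset.coe_card, hWL] at hk
      rw [hsortW,
        List.getD_eq_getElem _ _ (by rw [hWL]; omega),
        List.getD_eq_getElem _ _ (by rw [hWL]; omega),
        auxC_getElem, auxC_getElem]
      exact hcadj k (by omega)
  -- membership of the truncated candidate in L
  have hWmem : ((auxL idx (ℓ - r) ++ auxL (auxB n ℓ r t) r : List ℕ) : Multiset ℕ)
      ∈ {v ∈ Mset n d ℓ t | lexGE v u} := by
    refine ⟨⟨hTW, by rw [Multiset.coe_card, hWL]⟩, ?_⟩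
    rcases Nat.eq_zero_or_pos r with hr0 | hr1
    · subst hr0
      left
      rw [hu2]
      simp [auxL]
    · right
      rw [hsortW, hsortu]
      have h5 : List.range' 1 (ℓ - r) 1 ++ List.range' (1 + 1 * (ℓ - r)) r 1 = List.range' 1 ℓ 1 := by
        rw [List.range'_append (s := 1) (m := ℓ - r) (n := r) (step := 1), show ℓ - r + r = ℓ from by omega]
      have hUsplit : auxL idx ℓ = auxL idx (ℓ - r) ++ (List.range' (1 + 1 * (ℓ - r)) r).map idx := by
        simp only [auxL]
        rw [← List.map_append, h5]
      rw [hUsplit]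
      apply aux_lex_append
      refine aux_lex_head _ _ (by rw [auxL_length]; omega) (by simp; omega) ?_
      · rw [auxL_getElem _ _ 0 1 (by rw [auxL_length]; omega) rfl,
          aux_map_range'_getElem idx (1 + 1 * (ℓ - r)) r 0 (ℓ - r + 1)
            (by simp; omega) (by omega)]
        have hb1 : auxB n ℓ r t 1 = n - S (ℓ - r + 1) := rfl
        have h6 := hB hr1
        have h7 := hS1 (ℓ - r + 1) (by omega)
        rw [hb1]
        omega
  -- the split C = W ++ [n]
  have hbn : auxB n ℓ r t (1 + r) = n := by
    have h1 : auxB n ℓ r t (1 + r) = n - S (ℓ - r + (1 + r)) := rfl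
    rw [h1, show ℓ - r + (1 + r) = ℓ + 1 from by omega, hStop, Nat.sub_zero]
  have hCW : auxL idx (ℓ - r) ++ auxL (auxB n ℓ r t) (r + 1)
      = (auxL idx (ℓ - r) ++ auxL (auxB n ℓ r t) r) ++ [n] := by
    rw [auxL_succ (auxB n ℓ r t) r, hbn, List.append_assoc]
  constructor
  · -- ut ∈ Shad
    refine ⟨_, hWmem, n, by omega, le_rfl, ?_, by rw [hut2']; exact hTC⟩
    rw [hut2', hCW, Multiset.cons_coe]
    exact Multiset.coe_eq_coe.mpr (List.perm_append_singleton _ _)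
  · -- minimality
    intro v hv
    obtain ⟨w', hw'L, i, hi1, hin, hvi, hvT⟩ := hv
    obtain ⟨⟨⟨hwc, hwb, hws⟩, hwcard⟩, hwlex⟩ := hw'L
    set V := Multiset.sort v (· ≤ ·) with hV
    have hvcoe : v = ((V : List ℕ) : Multiset ℕ) := (Multiset.sort_eq _ _).symm
    have hVsorted : V.Pairwise (· ≤ ·) := Multiset.pairwise_sort _ _
    have hvcard : Multiset.card v = ℓ + 1 := by rw [hvi]; simp [hwcard]
    have hVlen : V.length = ℓ + 1 := by rw [hV, Multiset.length_sort, hvcard]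
    have hiV : i ∈ V := by rw [hV, Multiset.mem_sort, hvi]; exact Multiset.mem_cons_self _ _
    have hEperm : ((V.erase i : List ℕ) : Multiset ℕ) = w' := by
      rw [← Multiset.coe_erase, ← hvcoe, hvi, Multiset.erase_cons_head]
    have hEsorted : (V.erase i).Pairwise (· ≤ ·) :=
      List.Pairwise.sublist (List.erase_sublist (a := i) (l := V)) hVsorted
    have hsortw' : Multiset.sort w' (· ≤ ·) = V.erase i := by
      rw [← hEperm]; exact aux_sort_eq _ hEsorted
    have hElen : (V.erase i).length = ℓ := by rw [List.length_erase_of_mem hiV, hVlen]; omega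
    have hVn : ∀ k (hk : k < V.length), V[k] ≤ n := by
      intro k hk
      exact (hvT.2.1 V[k] (by rw [hvcoe]; exact Multiset.mem_coe.mpr (List.getElem_mem hk))).2
    have hVsp := aux_chain V t (fun k hk => by
      have h3 := hvT.2.2 k (by rw [hvcard]; rw [hVlen] at hk; exact hk)
      rwa [← hV] at h3)
    rcases trichotomous (r := List.Lex (α := ℕ) (· < ·)) V
        (auxL idx (ℓ - r) ++ auxL (auxB n ℓ r t) (r + 1)) with hlex | heq | hlex
    · exact Or.inr (by rw [hsortut, ← hV]; exact hlex)
    · exact Or.inl (by rw [hvcoe, heq]; exact hut2'.symm)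
    · exfalso
      obtain ⟨j, hj1, hj2, hjlt, hjeq⟩ := aux_lex_exists hlex (by rw [hCL, hVlen])
      rw [auxC_getElem] at hjlt
      by_cases hjm : j < ℓ - r
      · have horE : (V.erase i = auxL idx ℓ) ∨ List.Lex (· < ·) (V.erase i) (auxL idx ℓ) := by
          rcases hwlex with heq2 | hl2
          · left; rw [← hsortw', heq2]; exact hsortu
          · right; rw [← hsortw', ← hsortu]; exact hl2
        have hjE : j < (V.erase i).length := by rw [hElen]; omega
        have h6 := aux_lex_getElem horE j hjE (by rw [auxL_length]; omega)
          (fun k hkj hk1 hk2 => by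
            rw [auxL_getElem idx ℓ k (k + 1) hk2 rfl]
            have h7 := aux_erase_ge V hVsorted i k hk1
            have h8 := hjeq k hkj (by rw [hCL]; omega) (by rw [hVlen]; omega)
            rw [auxC_getElem] at h8
            have h9 : auxC idx n ℓ r t k = idx (k + 1) := by
              simp only [auxC, if_pos (show k < ℓ - r by omega)]
            omega)
        rw [auxL_getElem idx ℓ j (j + 1) (by rw [auxL_length]; omega) rfl] at h6
        have h7 := aux_erase_ge V hVsorted i j hjE
        have h9 : auxC idx n ℓ r t j = idx (j + 1) := by simp only [auxC, if_pos hjm]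
        omega
      · have hjV : j < V.length := hj2
        have hjle : j ≤ ℓ := by rw [hVlen] at hjV; omega
        have hlV : ℓ < V.length := by rw [hVlen]; omega
        have h5 := hVsp j ℓ hjle hlV
        have hsum : ∑ p ∈ Finset.Icc (j + 1) ℓ, t p = S (j + 1) := rfl
        have e1 : V.getD j 0 = V[j] := List.getD_eq_getElem _ _ hj2
        have e2 : V.getD ℓ 0 = V[ℓ] := List.getD_eq_getElem _ _ hlV
        have h9 : auxC idx n ℓ r t j = n - S (ℓ - r + (j - (ℓ - r) + 1)) := by
          simp only [auxC, if_neg hjm]; rfl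
        rw [show ℓ - r + (j - (ℓ - r) + 1) = j + 1 from by omega] at h9
        have h10 : V[ℓ] ≤ n := hVn ℓ hlV
        omega
end
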